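/- arXiv:2502.09968 — 6 statements merged into one kernel-verified Lean document; each statement's English description precedes it below -/
import Mathlib

section
/- If G = (V,E) is an α-heavy graph with average degree d and maximum degree Δ, then every maximal matching of G has cardinality at least d·|V|/(4Δ − α − 2). -/
/-- A matching of `G`: a set of edges of `G` that are pairwise vertex-disjoint. -/
def IsMatching {V : Type*} (G : SimpleGraph V) (M : Set (Sym2 V)) : Prop :=
  M ⊆ G.edgeSet ∧ ∀ e ∈ M, ∀ f ∈ M, e ≠ f → ∀ v, v ∈ e → v ∉ f

/-- A maximal matching: a matching not properly contained in another matching. -/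
def IsMaximalMatching {V : Type*} (G : SimpleGraph V) (M : Set (Sym2 V)) : Prop :=
  IsMatching G M ∧ ∀ M', IsMatching G M' → M ⊆ M' → M' = M

/-- A vertex is covered by a matching if it is incident to a matching edge. -/
def Covered {V : Type*} (M : Set (Sym2 V)) (v : V) : Prop :=
  ∃ e ∈ M, v ∈ e

/-- An induced 4-cycle of `G`, recorded as its set of four edges. -/
def IsInduced4Cycle {V : Type*} (G : SimpleGraph V) (C : Set (Sym2 V)) : Prop :=
  ∃ a b c d : V, a ≠ c ∧ b ≠ d ∧ G.Adj a b ∧ G.Adj b c ∧ G.Adj c d ∧ G.Adj d a ∧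
    ¬ G.Adj a c ∧ ¬ G.Adj b d ∧ C = {s(a,b), s(b,c), s(c,d), s(d,a)}

/-- `G` is `α`-heavy: every edge `e` lies in at least `α` induced 4-cycles such that
`e` is the only common edge of any two of these cycles. -/
def IsHeavy {V : Type*} (G : SimpleGraph V) (α : ℕ) : Prop :=
  ∀ e ∈ G.edgeSet, ∃ 𝒞 : Set (Set (Sym2 V)),
    α ≤ 𝒞.ncard ∧ (∀ C ∈ 𝒞, IsInduced4Cycle G C ∧ e ∈ C) ∧
    ∀ C ∈ 𝒞, ∀ C' ∈ 𝒞, C ≠ C' → C ∩ C' = {e}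

/-- The hypercube graph `Q_n` on binary strings of length `n`:
two strings are adjacent iff they differ in exactly one position. -/
def hypercube (n : ℕ) : SimpleGraph (Fin n → Bool) :=
  SimpleGraph.fromRel (fun x y => ∃! i, x i ≠ y i)

/-- The permutahedron graph `Π_n` on permutations of `[n]`:
`σ, τ` are adjacent iff `τ = σ * τᵢ` for an adjacent transposition `τᵢ = (i, i+1)`. -/
def permutahedron (n : ℕ) : SimpleGraph (Equiv.Perm (Fin n)) :=
  SimpleGraph.fromRel
    (fun σ τ => ∃ i j : Fin n, (i : ℕ) + 1 = (j : ℕ) ∧ τ = σ * Equiv.swap i j)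

/-- The neighborhood of the set `X` inside the set `S`. -/
def nbhdIn {V : Type*} (G : SimpleGraph V) (X S : Set V) : Set V :=
  {y ∈ S | ∃ x ∈ X, G.Adj x y}

lemma cover_lemma {V : Type*} {G : SimpleGraph V} {M : Set (Sym2 V)}
    (hM : IsMaximalMatching G M) : ∀ e ∈ G.edgeSet, ∃ w, w ∈ e ∧ Covered M w := by
  intro e he
  by_cases heM : e ∈ M
  · obtain ⟨⟨x, y⟩, rfl⟩ := e.exists_rep
    exact ⟨x, Sym2.mem_mk_left x y, _, heM, Sym2.mem_mk_left x y⟩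
  · by_contra h
    push_neg at h
    have hmatch : IsMatching G (insert e M) := by
      refine ⟨Set.insert_subset he hM.1.1, ?_⟩
      rintro e' (rfl | he') f' (rfl | hf') hne v hv
      · exact absurd rfl hne
      · intro hvf'
        exact h v hv ⟨f', hf', hvf'⟩
      · intro hve
        exact h v hve ⟨e', he', hv⟩
      · exact hM.1.2 e' he' f' hf' hne v hv
    have := hM.2 _ hmatch (Set.subset_insert e M)
    exact heM (this ▸ Set.mem_insert e M)

lemma side_core {V : Type*} {G : SimpleGraph V} {M : Set (Sym2 V)}
    (hM : IsMaximalMatching G M) {a b c d : V} (hac : a ≠ c) (hbd : b ≠ d)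
    (hab : G.Adj a b) (hbc : G.Adj b c) (hcd : G.Adj c d) (hda : G.Adj d a)
    (hf : s(a,b) ∈ M) :
    ∃ g, (g = s(b,c) ∨ g = s(d,a)) ∧ g ≠ s(a,b) ∧ g ∈ G.edgeSet ∧ g ∉ M ∧
      (∀ w, w ∈ g → Covered M w) ∧ (∃ w, w ∈ s(a,b) ∧ w ∈ g) := by
  have hcova : Covered M a := ⟨_, hf, Sym2.mem_mk_left a b⟩
  have hcovb : Covered M b := ⟨_, hf, Sym2.mem_mk_right a b⟩
  obtain ⟨w, hw, hcovw⟩ := cover_lemma hM s(c,d) hcd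
  have notinM : ∀ g : Sym2 V, g ≠ s(a,b) → (a ∈ g ∨ b ∈ g) → g ∉ M := by
    intro g hgne hmem hgM
    rcases hmem with h | h
    · exact hM.1.2 g hgM s(a,b) hf hgne a h (Sym2.mem_mk_left a b)
    · exact hM.1.2 g hgM s(a,b) hf hgne b h (Sym2.mem_mk_right a b)
  rcases Sym2.mem_iff.mp hw with hw' | hw'
  · -- c covered, take g = s(b,c)
    have hcovc : Covered M c := hw' ▸ hcovw
    have hne : s(b,c) ≠ s(a,b) := by
      intro h
      rcases Sym2.eq_iff.mp h with ⟨h1, h2⟩ | ⟨h1, h2⟩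
      · exact (G.ne_of_adj hab).symm h1
      · exact hac.symm h2
    refine ⟨s(b,c), Or.inl rfl, hne, hbc, notinM _ hne (Or.inr (Sym2.mem_mk_left b c)), ?_, b, Sym2.mem_mk_right a b, Sym2.mem_mk_left b c⟩
    intro x hx
    rcases Sym2.mem_iff.mp hx with rfl | rfl
    · exact hcovb
    · exact hcovc
  · -- d covered, take g = s(d,a)
    have hcovd : Covered M d := hw' ▸ hcovw
    have hne : s(d,a) ≠ s(a,b) := by
      intro h
      rcases Sym2.eq_iff.mp h with ⟨h1, h2⟩ | ⟨h1, h2⟩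
      · exact (G.ne_of_adj hda) h1
      · exact hbd h1.symm
    refine ⟨s(d,a), Or.inr rfl, hne, hda, notinM _ hne (Or.inl (Sym2.mem_mk_right d a)), ?_, a, Sym2.mem_mk_left a b, Sym2.mem_mk_right d a⟩
    intro x hx
    rcases Sym2.mem_iff.mp hx with rfl | rfl
    · exact hcovd
    · exact hcova

lemma exists_side_edge {V : Type*} {G : SimpleGraph V} {M : Set (Sym2 V)}
    (hM : IsMaximalMatching G M) {f : Sym2 V} (hf : f ∈ M) {C : Set (Sym2 V)}
    (hC : IsInduced4Cycle G C) (hfC : f ∈ C) :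
    ∃ g, g ∈ C ∧ g ≠ f ∧ g ∈ G.edgeSet ∧ g ∉ M ∧
      (∀ w, w ∈ g → Covered M w) ∧ (∃ w, w ∈ f ∧ w ∈ g) := by
  obtain ⟨a, b, c, d, hac, hbd, hab, hbc, hcd, hda, hnac, hnbd, hCeq⟩ := hC
  have hmem : ∀ x y : V, s(x,y) ∈ C →
      (s(x,y) = s(a,b) ∨ s(x,y) = s(b,c) ∨ s(x,y) = s(c,d) ∨ s(x,y) = s(d,a)) := by
    intro x y h
    rw [hCeq] at h
    simpa using h
  subst hCeq
  have hfC' : f = s(a,b) ∨ f = s(b,c) ∨ f = s(c,d) ∨ f = s(d,a) := by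
    simpa using hfC
  have inC : ∀ x y : V, (s(x,y) = s(a,b) ∨ s(x,y) = s(b,c) ∨ s(x,y) = s(c,d) ∨ s(x,y) = s(d,a)) →
      s(x,y) ∈ ({s(a,b), s(b,c), s(c,d), s(d,a)} : Set (Sym2 V)) := by
    intro x y h
    simpa using h
  rcases hfC' with rfl | rfl | rfl | rfl
  · obtain ⟨g, hg, h2, h3, h4, h5, h6⟩ := side_core hM hac hbd hab hbc hcd hda hf
    refine ⟨g, ?_, h2, h3, h4, h5, h6⟩
    rcases hg with rfl | rfl
    · exact inC _ _ (Or.inr (Or.inl rfl))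
    · exact inC _ _ (Or.inr (Or.inr (Or.inr rfl)))
  · obtain ⟨g, hg, h2, h3, h4, h5, h6⟩ := side_core hM hbd hac.symm hbc hcd hda hab hf
    refine ⟨g, ?_, h2, h3, h4, h5, h6⟩
    rcases hg with rfl | rfl
    · exact inC _ _ (Or.inr (Or.inr (Or.inl rfl)))
    · exact inC _ _ (Or.inl rfl)
  · obtain ⟨g, hg, h2, h3, h4, h5, h6⟩ := side_core hM hac.symm hbd.symm hcd hda hab hbc hf
    refine ⟨g, ?_, h2, h3, h4, h5, h6⟩
    rcases hg with rfl | rfl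
    · exact inC _ _ (Or.inr (Or.inr (Or.inr rfl)))
    · exact inC _ _ (Or.inr (Or.inl rfl))
  · obtain ⟨g, hg, h2, h3, h4, h5, h6⟩ := side_core hM hbd.symm hac hda hab hbc hcd hf
    refine ⟨g, ?_, h2, h3, h4, h5, h6⟩
    rcases hg with rfl | rfl
    · exact inC _ _ (Or.inl rfl)
    · exact inC _ _ (Or.inr (Or.inr (Or.inl rfl)))

open Finset in
lemma aux_main {V : Type*} [Fintype V] (G : SimpleGraph V) [DecidableRel G.Adj]
    (α : ℕ) (hheavy : IsHeavy G α) (Δ : ℕ) (hΔub : ∀ v, G.degree v ≤ Δ)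
    (M : Set (Sym2 V)) (hM : IsMaximalMatching G M) :
    2 * G.edgeSet.ncard + (α + 2) * M.ncard ≤ 4 * Δ * M.ncard := by
  classical
  have hMsub : M ⊆ G.edgeSet := hM.1.1
  set Mf : Finset (Sym2 V) := (Set.toFinite M).toFinset with hMf
  have hMfmem : ∀ e, e ∈ Mf ↔ e ∈ M := fun e => Set.Finite.mem_toFinset _
  set S : Set (Sym2 V) := {g | g ∈ G.edgeSet ∧ g ∉ M ∧ ∀ w, w ∈ g → Covered M w} with hS
  set Sf : Finset (Sym2 V) := (Set.toFinite S).toFinset with hSf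
  have hSfmem : ∀ g, g ∈ Sf ↔ g ∈ S := fun g => Set.Finite.mem_toFinset _
  set Ef : Finset (Sym2 V) := G.edgeFinset with hEf
  have hMcard : M.ncard = Mf.card := Set.ncard_eq_toFinset_card M (Set.toFinite M)
  have hEcard : G.edgeSet.ncard = Ef.card := by
    rw [hEf, ← Set.ncard_coe_finset, SimpleGraph.coe_edgeFinset]
  have hMfsub : Mf ⊆ Ef := by
    intro e he
    exact SimpleGraph.mem_edgeFinset.mpr (hMsub ((hMfmem e).mp he))
  have hSfsub : Sf ⊆ Ef := by
    intro g hg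
    exact SimpleGraph.mem_edgeFinset.mpr ((hSfmem g).mp hg).1
  have hdisj : Disjoint Mf Sf := by
    rw [Finset.disjoint_left]
    intro e heM heS
    exact ((hSfmem e).mp heS).2.1 ((hMfmem e).mp heM)
  -- covered vertices
  set Covf : Finset V := univ.filter (Covered M) with hCovf
  have hCov2 : Covf.card ≤ 2 * Mf.card := by
    have hsub : Covf ⊆ Mf.biUnion (fun f => univ.filter (· ∈ f)) := by
      intro v hv
      obtain ⟨e, heM, hve⟩ := (Finset.mem_filter.mp hv).2
      exact Finset.mem_biUnion.mpr ⟨e, (hMfmem e).mpr heM, Finset.mem_filter.mpr ⟨mem_univ v, hve⟩⟩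
    calc Covf.card ≤ (Mf.biUnion (fun f => univ.filter (· ∈ f))).card := Finset.card_le_card hsub
      _ ≤ ∑ f ∈ Mf, (univ.filter (· ∈ f)).card := Finset.card_biUnion_le
      _ ≤ ∑ _f ∈ Mf, 2 := by
          refine Finset.sum_le_sum ?_
          intro f hf
          obtain ⟨⟨x, y⟩, rfl⟩ := f.exists_rep
          have : univ.filter (· ∈ s(x,y)) ⊆ {x, y} := by
            intro v hv
            have := (Finset.mem_filter.mp hv).2
            rcases Sym2.mem_iff.mp this with rfl | rfl
            · exact Finset.mem_insert_self _ _
            · exact Finset.mem_insert.mpr (Or.inr (Finset.mem_singleton_self _))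
          calc (univ.filter (· ∈ s(x,y))).card ≤ ({x,y} : Finset V).card := Finset.card_le_card this
            _ ≤ 2 := Finset.card_insert_le x {y} |>.trans (by simp)
      _ = 2 * Mf.card := by rw [Finset.sum_const, smul_eq_mul, mul_comm]
  -- count A
  set A : ℕ := ∑ e ∈ Ef, ∑ w : V, (if w ∈ e ∧ Covered M w then 1 else 0) with hA
  -- upper bound on A
  have hA_upper : A ≤ 2 * Δ * Mf.card := by
    rw [hA, Finset.sum_comm]
    have h1 : ∀ w : V, (∑ e ∈ Ef, if w ∈ e ∧ Covered M w then 1 else 0)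
        ≤ if Covered M w then Δ else 0 := by
      intro w
      by_cases hc : Covered M w
      · simp only [hc, and_true, if_true]
        have : (∑ e ∈ Ef, if w ∈ e then 1 else 0) = (Ef.filter (fun e => w ∈ e)).card := by
          rw [Finset.card_filter]
        rw [this]
        have : Ef.filter (fun e => w ∈ e) = G.incidenceFinset w := by
          rw [SimpleGraph.incidenceFinset_eq_filter]
        rw [this, SimpleGraph.card_incidenceFinset_eq_degree]
        exact hΔub w
      · simp [hc]
    calc (∑ w : V, ∑ e ∈ Ef, if w ∈ e ∧ Covered M w then 1 else 0)
        ≤ ∑ w : V, (if Covered M w then Δ else 0) := Finset.sum_le_sum (fun w _ => h1 w)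
      _ = Δ * Covf.card := by
          rw [← Finset.sum_filter, Finset.sum_const, smul_eq_mul, mul_comm]
      _ ≤ Δ * (2 * Mf.card) := Nat.mul_le_mul_left _ hCov2
      _ = 2 * Δ * Mf.card := by ring
  -- lower bound on A
  have hA_lower : Ef.card + (Mf.card + Sf.card) ≤ A := by
    have hpt : ∀ e ∈ Ef, (if e ∈ Mf ∪ Sf then 2 else 1)
        ≤ ∑ w : V, (if w ∈ e ∧ Covered M w then 1 else 0) := by
      intro e he
      have heE : e ∈ G.edgeSet := SimpleGraph.mem_edgeFinset.mp he
      have hsum : (∑ w : V, if w ∈ e ∧ Covered M w then 1 else 0)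
          = (univ.filter (fun w => w ∈ e ∧ Covered M w)).card := by
        rw [Finset.card_filter]
      rw [hsum]
      by_cases hcase : e ∈ Mf ∪ Sf
      · rw [if_pos hcase]
        obtain ⟨⟨x, y⟩, rfl⟩ := e.exists_rep
        have hxy : x ≠ y := G.ne_of_adj ((SimpleGraph.mem_edgeSet G).mp heE)
        have hcovboth : Covered M x ∧ Covered M y := by
          rcases Finset.mem_union.mp hcase with h | h
          · have hmem := (hMfmem _).mp h
            exact ⟨⟨_, hmem, Sym2.mem_mk_left x y⟩, ⟨_, hmem, Sym2.mem_mk_right x y⟩⟩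
          · have hmem := (hSfmem _).mp h
            exact ⟨hmem.2.2 x (Sym2.mem_mk_left x y), hmem.2.2 y (Sym2.mem_mk_right x y)⟩
        have hsub : ({x, y} : Finset V) ⊆ univ.filter (fun w => w ∈ s(x,y) ∧ Covered M w) := by
          intro v hv
          have hv' : v = x ∨ v = y := by simpa using hv
          refine Finset.mem_filter.mpr ⟨mem_univ _, Sym2.mem_iff.mpr hv', ?_⟩
          rcases hv' with h | h
          · rw [h]; exact hcovboth.1
          · rw [h]; exact hcovboth.2
        calc 2 = ({x, y} : Finset V).card := by rw [Finset.card_insert_of_notMem (by simpa using hxy), Finset.card_singleton]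
          _ ≤ _ := Finset.card_le_card hsub
      · rw [if_neg hcase]
        obtain ⟨w, hwe, hcov⟩ := cover_lemma hM e heE
        rw [Nat.one_le_iff_ne_zero, ← Nat.pos_iff_ne_zero, Finset.card_pos]
        exact ⟨w, Finset.mem_filter.mpr ⟨mem_univ _, hwe, hcov⟩⟩
    have := Finset.sum_le_sum hpt
    have hsum2 : (∑ e ∈ Ef, if e ∈ Mf ∪ Sf then 2 else 1)
        = Ef.card + (Mf ∪ Sf).card := by
      have : ∀ e : Sym2 V, (if e ∈ Mf ∪ Sf then 2 else 1) = 1 + (if e ∈ Mf ∪ Sf then 1 else 0) := by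
        intro e; split <;> rfl
      rw [Finset.sum_congr rfl (fun e _ => this e), Finset.sum_add_distrib, Finset.sum_const,
        smul_eq_mul, mul_one, ← Finset.card_filter, Finset.filter_mem_eq_inter,
        Finset.inter_eq_right.mpr (Finset.union_subset hMfsub hSfsub)]
    rw [hsum2, Finset.card_union_of_disjoint hdisj] at this
    exact this
  -- count B
  set B : ℕ := ∑ f ∈ Mf, ∑ g ∈ Sf, (if ∃ w, w ∈ f ∧ w ∈ g then 1 else 0) with hB
  have hB_lower : α * Mf.card ≤ B := by
    have hpt : ∀ f ∈ Mf, α ≤ ∑ g ∈ Sf, (if ∃ w, w ∈ f ∧ w ∈ g then 1 else 0) := by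
      intro f hf
      have hfM : f ∈ M := (hMfmem f).mp hf
      obtain ⟨𝒞, hαle, h𝒞, hinter⟩ := hheavy f (hMsub hfM)
      have hside : ∀ C ∈ 𝒞, ∃ g, g ∈ C ∧ g ≠ f ∧ g ∈ G.edgeSet ∧ g ∉ M ∧
          (∀ w, w ∈ g → Covered M w) ∧ (∃ w, w ∈ f ∧ w ∈ g) :=
        fun C hC => exists_side_edge hM hfM (h𝒞 C hC).1 (h𝒞 C hC).2
      have : Nonempty (Sym2 V) := ⟨f⟩
      choose! φ hφ1 hφ2 hφ3 hφ4 hφ5 hφ6 using hside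
      have hinj : Set.InjOn φ 𝒞 := by
        intro C hC C' hC' heq
        by_contra hne
        have hmem : φ C ∈ C ∩ C' := ⟨hφ1 C hC, heq ▸ hφ1 C' hC'⟩
        rw [hinter C hC C' hC' hne] at hmem
        exact hφ2 C hC hmem
      have himg : φ '' 𝒞 ⊆ ↑(Sf.filter (fun g => ∃ w, w ∈ f ∧ w ∈ g)) := by
        rintro _ ⟨C, hC, rfl⟩
        refine Finset.mem_coe.mpr (Finset.mem_filter.mpr ⟨?_, hφ6 C hC⟩)
        exact (hSfmem _).mpr ⟨hφ3 C hC, hφ4 C hC, hφ5 C hC⟩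
      have hcardsum : (∑ g ∈ Sf, if ∃ w, w ∈ f ∧ w ∈ g then 1 else 0)
          = (Sf.filter (fun g => ∃ w, w ∈ f ∧ w ∈ g)).card := by
        rw [Finset.card_filter]
      rw [hcardsum]
      calc α ≤ 𝒞.ncard := hαle
        _ = (φ '' 𝒞).ncard := (Set.ncard_image_of_injOn hinj).symm
        _ ≤ (↑(Sf.filter (fun g => ∃ w, w ∈ f ∧ w ∈ g)) : Set (Sym2 V)).ncard :=
            Set.ncard_le_ncard himg (Finset.finite_toSet _)
        _ = (Sf.filter (fun g => ∃ w, w ∈ f ∧ w ∈ g)).card := Set.ncard_coe_finset _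
    calc α * Mf.card = ∑ _f ∈ Mf, α := by rw [Finset.sum_const, smul_eq_mul, mul_comm]
      _ ≤ B := Finset.sum_le_sum hpt
  have hB_upper : B ≤ 2 * Sf.card := by
    rw [hB, Finset.sum_comm]
    have hpt : ∀ g ∈ Sf, (∑ f ∈ Mf, if ∃ w, w ∈ f ∧ w ∈ g then 1 else 0) ≤ 2 := by
      intro g hg
      obtain ⟨⟨x, y⟩, rfl⟩ := g.exists_rep
      rw [← Finset.card_filter]
      have hwit : ∀ f ∈ Mf.filter (fun f => ∃ w, w ∈ f ∧ w ∈ s(x,y)),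
          ∃ w, w ∈ f ∧ w ∈ s(x,y) := fun f hf => (Finset.mem_filter.mp hf).2
      have : Nonempty V := ⟨x⟩
      choose! ψ hψ1 hψ2 using hwit
      have hmap : ∀ f ∈ Mf.filter (fun f => ∃ w, w ∈ f ∧ w ∈ s(x,y)), ψ f ∈ ({x, y} : Finset V) := by
        intro f hf
        rcases Sym2.mem_iff.mp (hψ2 f hf) with rfl | rfl
        · exact Finset.mem_insert_self _ _
        · exact Finset.mem_insert.mpr (Or.inr (Finset.mem_singleton_self _))
      have hinj : Set.InjOn ψ ↑(Mf.filter (fun f => ∃ w, w ∈ f ∧ w ∈ s(x,y))) := by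
        intro f1 hf1 f2 hf2 heq
        rw [Finset.mem_coe] at hf1 hf2
        by_contra hne
        have h1 : ψ f1 ∈ f1 := hψ1 f1 hf1
        have h2 : ψ f1 ∈ f2 := heq ▸ hψ1 f2 hf2
        exact hM.1.2 f1 ((hMfmem _).mp (Finset.mem_filter.mp hf1).1) f2
          ((hMfmem _).mp (Finset.mem_filter.mp hf2).1) hne (ψ f1) h1 h2
      calc (Mf.filter (fun f => ∃ w, w ∈ f ∧ w ∈ s(x,y))).card
          ≤ ({x, y} : Finset V).card := Finset.card_le_card_of_injOn ψ hmap hinj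
        _ ≤ 2 := Finset.card_insert_le x {y} |>.trans (by simp)
    calc (∑ g ∈ Sf, ∑ f ∈ Mf, if ∃ w, w ∈ f ∧ w ∈ g then 1 else 0)
        ≤ ∑ _g ∈ Sf, 2 := Finset.sum_le_sum hpt
      _ = 2 * Sf.card := by rw [Finset.sum_const, smul_eq_mul, mul_comm]
  -- combine
  rw [hEcard, hMcard]
  have key1 : Ef.card + (Mf.card + Sf.card) ≤ 2 * Δ * Mf.card := hA_lower.trans hA_upper
  have key2 : α * Mf.card ≤ 2 * Sf.card := hB_lower.trans hB_upper
  nlinarith [key1, key2]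

/-- if `G` is `α`-heavy with average degree `d` and maximum degree `Δ`, then
every maximal matching of `G` has cardinality at least `d·|V|/(4Δ − α − 2)`. -/
theorem stmt0 {V : Type*} [Fintype V] (G : SimpleGraph V) [DecidableRel G.Adj]
    (α : ℕ) (hα : 0 < α) (hheavy : IsHeavy G α)
    (d : ℝ) (hd : d = 2 * (G.edgeSet.ncard : ℝ) / (Fintype.card V))
    (Δ : ℕ) (hΔub : ∀ v, G.degree v ≤ Δ) (hΔmem : ∃ v, G.degree v = Δ)
    (M : Set (Sym2 V)) (hM : IsMaximalMatching G M) :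
    d * (Fintype.card V) / (4 * (Δ : ℝ) - (α : ℝ) - 2) ≤ (M.ncard : ℝ) := by
  classical
  have key := aux_main G α hheavy Δ hΔub M hM
  have hkey : 2 * (G.edgeSet.ncard : ℝ) + ((α : ℝ) + 2) * (M.ncard : ℝ)
      ≤ 4 * (Δ : ℝ) * (M.ncard : ℝ) := by exact_mod_cast key
  have hm0 : (0:ℝ) ≤ (M.ncard : ℝ) := Nat.cast_nonneg _
  have hE0 : (0:ℝ) ≤ (G.edgeSet.ncard : ℝ) := Nat.cast_nonneg _
  have hdn_le : d * (Fintype.card V : ℝ) ≤ 2 * (G.edgeSet.ncard : ℝ) := by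
    rcases eq_or_ne ((Fintype.card V : ℝ)) 0 with h | h
    · rw [h, mul_zero]; positivity
    · rw [hd, div_mul_cancel₀ _ h]
  have hdn_nonneg : 0 ≤ d * (Fintype.card V : ℝ) := by
    rw [hd]; positivity
  rcases le_or_gt (4 * (Δ:ℝ) - (α:ℝ) - 2) 0 with hD | hD
  · have hle : d * (Fintype.card V : ℝ) / (4 * (Δ:ℝ) - (α:ℝ) - 2) ≤ 0 :=
      div_nonpos_iff.mpr (Or.inl ⟨hdn_nonneg, hD⟩)
    linarith
  · rw [div_le_iff₀ hD]
    nlinarith [hkey, hdn_le]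
end

section
/- Every maximal matching of the n-dimensional hypercube graph Q_n has at least 2^n · n/(3n−1) edges. -/
open Classical Finset

noncomputable section HC

variable {n : ℕ}

def flipV (x : Fin n → Bool) (i : Fin n) : Fin n → Bool := Function.update x i (!(x i))

lemma flipV_self (x : Fin n → Bool) (i : Fin n) : flipV x i i = !(x i) := by
  simp [flipV]

lemma flipV_ne_apply (x : Fin n → Bool) {i j : Fin n} (h : j ≠ i) : flipV x i j = x j := by
  simp [flipV, Function.update_of_ne h]

lemma flipV_flipV (x : Fin n → Bool) (i : Fin n) : flipV (flipV x i) i = x := by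
  funext j
  by_cases h : j = i
  · subst h; simp [flipV]
  · simp [flipV_ne_apply _ h]

lemma flipV_ne (x : Fin n → Bool) (i : Fin n) : flipV x i ≠ x := by
  intro h
  have := congrFun h i
  simp [flipV] at this

lemma flipV_inj {x : Fin n → Bool} {i j : Fin n} (h : flipV x i = flipV x j) : i = j := by
  by_contra hij
  have := congrFun h i
  rw [flipV_self, flipV_ne_apply _ hij] at this
  simp at this

lemma flipV_comm {x : Fin n → Bool} {i j : Fin n} (h : i ≠ j) :
    flipV (flipV x i) j = flipV (flipV x j) i := by
  simp only [flipV, Function.update_of_ne h.symm, Function.update_of_ne h]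
  exact Function.update_comm h _ _ _

lemma hypercube_adj {x y : Fin n → Bool} :
    (hypercube n).Adj x y ↔ ∃ i, y = flipV x i := by
  constructor
  · rintro ⟨hne, h | h⟩
    · obtain ⟨i, hi, hu⟩ := h
      refine ⟨i, funext fun j => ?_⟩
      by_cases hj : j = i
      · subst hj
        rw [flipV_self]
        revert hi; cases x j <;> cases y j <;> simp
      · rw [flipV_ne_apply _ hj]
        by_contra hcon
        exact hj (hu j (Ne.symm hcon))
    · obtain ⟨i, hi, hu⟩ := h
      refine ⟨i, funext fun j => ?_⟩
      by_cases hj : j = i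
      · subst hj
        rw [flipV_self]
        revert hi; cases x j <;> cases y j <;> simp
      · rw [flipV_ne_apply _ hj]
        by_contra hcon
        exact hj (hu j hcon)
  · rintro ⟨i, rfl⟩
    refine ⟨(flipV_ne x i).symm, Or.inl ⟨i, ?_, fun j hj => ?_⟩⟩
    · show x i ≠ flipV x i i
      rw [flipV_self]; cases x i <;> simp
    · by_contra hj'
      exact hj (by rw [flipV_ne_apply _ hj'])

end HC

open SimpleGraph in
lemma covered_of_adj {n : ℕ} {M : Set (Sym2 (Fin n → Bool))}
    (hM : IsMaximalMatching (hypercube n) M)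
    {u w : Fin n → Bool} (h : (hypercube n).Adj u w) (hu : ¬ Covered M u) : Covered M w := by
  by_contra hw
  have hnew : s(u,w) ∉ M := fun hmem => hu ⟨_, hmem, Sym2.mem_mk_left _ _⟩
  have hmatch : IsMatching (hypercube n) (insert s(u,w) M) := by
    constructor
    · intro e he
      rcases Set.mem_insert_iff.1 he with rfl | he
      · rw [SimpleGraph.mem_edgeSet]; exact h
      · exact hM.1.1 he
    · intro e he f hf hef v hv
      rcases Set.mem_insert_iff.1 he with he1 | he2
      · rcases Set.mem_insert_iff.1 hf with hf1 | hf2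
        · exact absurd (he1.trans hf1.symm) hef
        · subst he1
          intro hvf
          rcases Sym2.mem_iff.1 hv with rfl | rfl
          · exact hu ⟨f, hf2, hvf⟩
          · exact hw ⟨f, hf2, hvf⟩
      · rcases Set.mem_insert_iff.1 hf with hf1 | hf2
        · subst hf1
          intro hvf
          rcases Sym2.mem_iff.1 hvf with rfl | rfl
          · exact hu ⟨e, he2, hv⟩
          · exact hw ⟨e, he2, hv⟩
        · exact hM.1.2 e he2 f hf2 hef v hv
  have := hM.2 _ hmatch (Set.subset_insert _ _)
  exact hnew (this ▸ Set.mem_insert _ _)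

open Finset in
lemma key (n : ℕ) (M : Set (Sym2 (Fin n → Bool))) (hM : IsMaximalMatching (hypercube n) M) :
    n * 2 ^ n ≤ (3 * n - 1) * M.ncard := by
  classical
  have hMfin : M.Finite := Set.toFinite M
  set F : Finset (Sym2 (Fin n → Bool)) := hMfin.toFinset with hFdef
  have hFmem : ∀ {e}, e ∈ F ↔ e ∈ M := fun {e} => hMfin.mem_toFinset
  have hncard : M.ncard = F.card := Set.ncard_eq_toFinset_card M hMfin
  set Cov : Finset (Fin n → Bool) := Finset.univ.filter (fun v => Covered M v) with hCovdef
  set U : Finset (Fin n → Bool) := Finset.univ.filter (fun v => ¬ Covered M v) with hUdef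
  have hsplit : Cov.card + U.card = 2 ^ n := by
    rw [hCovdef, hUdef, Finset.card_filter_add_card_filter_not, Finset.card_univ]
    simp [Fintype.card_fun]
  -- each vertex of U is uncovered
  have hUuncov : ∀ u ∈ U, ¬ Covered M u := by
    intro u hu; exact (Finset.mem_filter.1 hu).2
  -- Cov has 2 * F.card elements
  have hCovEq : Cov = F.biUnion (fun e => Finset.univ.filter (fun v => v ∈ e)) := by
    ext v
    simp only [hCovdef, Finset.mem_filter, Finset.mem_univ, true_and, Finset.mem_biUnion]
    constructor
    · rintro ⟨e, heM, hv⟩; exact ⟨e, hFmem.2 heM, hv⟩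
    · rintro ⟨e, heF, hv⟩; exact ⟨e, hFmem.1 heF, hv⟩
  have hCov2 : Cov.card = 2 * F.card := by
    rw [hCovEq, Finset.card_biUnion]
    · rw [Finset.sum_congr rfl (fun e he => ?_), Finset.sum_const, smul_eq_mul, mul_comm]
      · have heM : e ∈ M := hFmem.1 he
        have heE : e ∈ (hypercube n).edgeSet := hM.1.1 heM
        revert heM heE
        induction e using Sym2.ind with
        | _ x y =>
          intro heM heE
          have hadj : (hypercube n).Adj x y := by rwa [SimpleGraph.mem_edgeSet] at heE
          have hfe : Finset.univ.filter (fun v => v ∈ s(x,y)) = {x, y} := by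
            ext v; simp [Sym2.mem_iff]
          rw [hfe, Finset.card_insert_of_notMem (by simp [hadj.ne]), Finset.card_singleton]
    · intro e he f hf hef
      rw [Function.onFun, Finset.disjoint_left]
      intro v hv hv'
      exact hM.1.2 e (hFmem.1 he) f (hFmem.1 hf) hef v
        (Finset.mem_filter.1 hv).2 (Finset.mem_filter.1 hv').2
  -- the flip of an uncovered vertex is covered
  have hflipcov : ∀ u ∈ U, ∀ i : Fin n, Covered M (flipV u i) := fun u hu i =>
    covered_of_adj hM (hypercube_adj.2 ⟨i, rfl⟩) (hUuncov u hu)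
  -- the map sending (u, i) to the matching edge containing flipV u i
  set Φ : (Fin n → Bool) × Fin n → Sym2 (Fin n → Bool) := fun p =>
    if h : Covered M (flipV p.1 p.2) then h.choose else s(p.1, p.1) with hΦdef
  have hΦspec : ∀ u ∈ U, ∀ i : Fin n, Φ (u, i) ∈ M ∧ flipV u i ∈ Φ (u, i) := by
    intro u hu i
    have h := hflipcov u hu i
    simp only [hΦdef, dif_pos h]
    exact ⟨h.choose_spec.1, h.choose_spec.2⟩
  set S : Finset ((Fin n → Bool) × Fin n) := U ×ˢ Finset.univ with hSdef
  have hmaps : ∀ p ∈ S, Φ p ∈ F := by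
    intro p hp
    exact hFmem.2 (hΦspec p.1 (Finset.mem_product.1 hp).1 p.2).1
  -- fiber bound
  have hfiber : ∀ e ∈ F, (S.filter (fun p => Φ p = e)).card ≤ n - 1 := by
    intro e he
    have heM : e ∈ M := hFmem.1 he
    have heE : e ∈ (hypercube n).edgeSet := hM.1.1 heM
    clear he
    revert heM heE
    induction e using Sym2.ind with
    | _ x y =>
      intro heM heE
      have hadj : (hypercube n).Adj x y := by rwa [SimpleGraph.mem_edgeSet] at heE
      obtain ⟨j, rfl⟩ := hypercube_adj.1 hadj
      -- structure of fiber elements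
      have hstruct : ∀ p ∈ S.filter (fun p => Φ p = s(x, flipV x j)),
          p.2 ≠ j ∧ (p.1 = flipV x p.2 ∨ p.1 = flipV (flipV x j) p.2) := by
        rintro ⟨u, i⟩ hp
        obtain ⟨hpS, hpΦ⟩ := Finset.mem_filter.1 hp
        have huU : u ∈ U := (Finset.mem_product.1 hpS).1
        have hspec := hΦspec u huU i
        rw [hpΦ] at hspec
        have hmem : flipV u i = x ∨ flipV u i = flipV x j := Sym2.mem_iff.1 hspec.2
        have hcases : u = flipV x i ∨ u = flipV (flipV x j) i := by
          rcases hmem with h | h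
          · left; rw [← h, flipV_flipV]
          · right; rw [← h, flipV_flipV]
        have hij : i ≠ j := by
          rintro rfl
          rcases hcases with h | h
          · exact hUuncov u huU (h ▸ ⟨s(x, flipV x i), heM, Sym2.mem_mk_right _ _⟩)
          · rw [flipV_flipV] at h
            exact hUuncov u huU (h ▸ ⟨s(x, flipV x i), heM, Sym2.mem_mk_left _ _⟩)
        exact ⟨hij, hcases⟩
      -- second projection is injective on the fiber
      have hinj : Set.InjOn Prod.snd ((S.filter  (fun p => Φ p = s(x, flipV x j))) : Set ((Fin n → Bool) × Fin n)) := by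
        rintro ⟨u, i⟩ hp ⟨u', i'⟩ hq h2
        simp only at h2
        subst h2
        obtain ⟨hij, hc⟩ := hstruct _ hp
        obtain ⟨-, hc'⟩ := hstruct _ hq
        simp only at hij hc hc' ⊢
        have huU : u ∈ U := (Finset.mem_product.1 (Finset.mem_filter.1 hp).1).1
        have huU' : u' ∈ U := (Finset.mem_product.1 (Finset.mem_filter.1 hq).1).1
        have hkey : ∀ a b : Fin n → Bool, a = flipV x i → b = flipV (flipV x j) i →
            ¬ Covered M a → ¬ Covered M b → False := by
          intro a b ha hb hca hcb
          have : b = flipV a j := by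
            rw [ha, hb, flipV_comm (Ne.symm hij)]
          exact hcb (covered_of_adj hM (hypercube_adj.2 ⟨j, this⟩) hca)
        rcases hc with h1 | h1 <;> rcases hc' with h2 | h2
        · rw [h1, h2]
        · exact absurd (hkey u u' h1 h2 (hUuncov u huU) (hUuncov u' huU')) (fun h => h)
        · exact absurd (hkey u' u h2 h1 (hUuncov u' huU') (hUuncov u huU)) (fun h => h)
        · rw [h1, h2]
      have hmapsj : ∀ p ∈ S.filter (fun p => Φ p = s(x, flipV x j)),
          p.2 ∈ Finset.univ.erase j := by
        intro p hp
        exact Finset.mem_erase.2 ⟨(hstruct p hp).1, Finset.mem_univ _⟩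
      calc (S.filter (fun p => Φ p = s(x, flipV x j))).card
          ≤ (Finset.univ.erase j).card :=
            Finset.card_le_card_of_injOn Prod.snd hmapsj hinj
        _ = n - 1 := by rw [Finset.card_erase_of_mem (Finset.mem_univ _)]; simp
  -- double counting
  have hcount : S.card ≤ (n - 1) * F.card :=
    Finset.card_le_mul_card_image_of_maps_to hmaps (n - 1) hfiber
  have hScard : S.card = U.card * n := by
    rw [hSdef, Finset.card_product, Finset.card_univ, Fintype.card_fin]
  rw [hncard]
  rcases n with - | m
  · simp
  · have h1 : U.card * (m + 1) ≤ m * F.card := by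
      rw [← hScard]; simpa using hcount
    have h3 : 3 * (m + 1) - 1 = 3 * m + 2 := by omega
    rw [h3]
    calc (m + 1) * 2 ^ (m + 1) = (m + 1) * (2 * F.card) + (m + 1) * U.card := by
          rw [← hCov2, ← hsplit]; ring
      _ ≤ (m + 1) * (2 * F.card) + m * F.card := by
          have : (m + 1) * U.card ≤ m * F.card := by rw [mul_comm]; exact h1
          omega
      _ = (3 * m + 2) * F.card := by ring

theorem stmt1' (n : ℕ) (M : Set (Sym2 (Fin n → Bool)))
    (hM : IsMaximalMatching (hypercube n) M) :
    (2 : ℝ) ^ n * n / (3 * (n : ℝ) - 1) ≤ (M.ncard : ℝ) := by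
  rcases n with - | m
  · norm_num
  · have hkey := key (m + 1) M hM
    have h3 : 3 * (m + 1) - 1 = 3 * m + 2 := by omega
    rw [h3] at hkey
    have hc : ((m + 1 : ℕ) : ℝ) * 2 ^ (m + 1) ≤ ((3 * m + 2 : ℕ) : ℝ) * (M.ncard : ℝ) := by
      exact_mod_cast hkey
    have hpos : (0 : ℝ) < 3 * ((m + 1 : ℕ) : ℝ) - 1 := by
      push_cast
      have : (0:ℝ) ≤ (m : ℝ) := Nat.cast_nonneg m
      linarith
    rw [div_le_iff₀ hpos]
    push_cast at hc ⊢
    nlinarith [hc]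


/-- every maximal matching of `Q_n` has at least `2^n·n/(3n−1)` edges. -/
theorem stmt1 (n : ℕ) (M : Set (Sym2 (Fin n → Bool)))
    (hM : IsMaximalMatching (hypercube n) M) :
    (2 : ℝ) ^ n * n / (3 * (n : ℝ) - 1) ≤ (M.ncard : ℝ) := by
  exact stmt1' n M hM
end

section
/- The permutahedron graph Π_n is (n−4)-heavy: for every edge e of Π_n there exist at least n−4 induced 4-cycles containing e such that e is the only common edge of any two of them. -/
namespace Stmt3Aux

variable {n : ℕ}

lemma swap_ne_one {i j : Fin n} (h : i ≠ j) : Equiv.swap i j ≠ 1 := by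
  intro he
  have h2 : Equiv.swap i j i = (1 : Equiv.Perm (Fin n)) i := by rw [he]
  rw [Equiv.swap_apply_left, Equiv.Perm.one_apply] at h2
  exact h h2.symm

lemma swap_ne_swap {i j k l : Fin n} (hij : i ≠ j) (hik : i ≠ k) (hil : i ≠ l) :
    Equiv.swap i j ≠ Equiv.swap k l := by
  intro he
  have h2 : Equiv.swap i j i = Equiv.swap k l i := by rw [he]
  rw [Equiv.swap_apply_left, Equiv.swap_apply_of_ne_of_ne hik hil] at h2
  exact hij h2.symm

lemma adjswap_ne {k l k' l' : Fin n} (hkl : (k:ℕ)+1 = (l:ℕ)) (hk'l' : (k':ℕ)+1 = (l':ℕ))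
    (h : k ≠ k') : Equiv.swap k l ≠ Equiv.swap k' l' := by
  intro he
  have h2 : Equiv.swap k l k = Equiv.swap k' l' k := by rw [he]
  rw [Equiv.swap_apply_left, Equiv.swap_apply_def] at h2
  have hv : (k:ℕ) ≠ (k':ℕ) := fun hh => h (Fin.ext hh)
  split_ifs at h2 with h1 h3
  · exact h h1
  · have e1 := congrArg Fin.val h2
    have e2 := congrArg Fin.val h3
    omega
  · have e1 := congrArg Fin.val h2
    omega

lemma swap_comm {i j k l : Fin n} (hik : i ≠ k) (hil : i ≠ l) (hjk : j ≠ k) (hjl : j ≠ l) :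
    Equiv.swap i j * Equiv.swap k l = Equiv.swap k l * Equiv.swap i j := by
  have hd : (Equiv.swap i j).Disjoint (Equiv.swap k l) := by
    intro x
    rcases eq_or_ne x i with rfl | h1
    · right; exact Equiv.swap_apply_of_ne_of_ne hik hil
    rcases eq_or_ne x j with rfl | h2
    · right; exact Equiv.swap_apply_of_ne_of_ne hjk hjl
    · left; exact Equiv.swap_apply_of_ne_of_ne h1 h2
  exact hd.commute.eq

lemma prod_ne_swap {i j k l : Fin n} (hij : i ≠ j) (hik : i ≠ k) (hil : i ≠ l)
    (hjk : j ≠ k) (hjl : j ≠ l) (hkl : k ≠ l) (p q : Fin n) :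
    Equiv.swap i j * Equiv.swap k l ≠ Equiv.swap p q := by
  intro he
  have hi : Equiv.swap p q i = j := by
    rw [← he, Equiv.Perm.mul_apply, Equiv.swap_apply_of_ne_of_ne hik hil,
      Equiv.swap_apply_left]
  have hj : Equiv.swap p q j = i := by
    rw [← he, Equiv.Perm.mul_apply, Equiv.swap_apply_of_ne_of_ne hjk hjl,
      Equiv.swap_apply_right]
  have hk : Equiv.swap p q k = l := by
    rw [← he, Equiv.Perm.mul_apply, Equiv.swap_apply_left,
      Equiv.swap_apply_of_ne_of_ne (Ne.symm hil) (Ne.symm hjl)]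
  have h1 : i = p ∨ i = q := by
    by_contra hc; push_neg at hc
    rw [Equiv.swap_apply_of_ne_of_ne hc.1 hc.2] at hi; exact hij hi
  have h2 : j = p ∨ j = q := by
    by_contra hc; push_neg at hc
    rw [Equiv.swap_apply_of_ne_of_ne hc.1 hc.2] at hj; exact hij hj.symm
  have h3 : k = p ∨ k = q := by
    by_contra hc; push_neg at hc
    rw [Equiv.swap_apply_of_ne_of_ne hc.1 hc.2] at hk; exact hkl hk
  rcases h1 with h1|h1 <;> rcases h2 with h2|h2 <;> rcases h3 with h3|h3 <;>
    first
      | exact hij (h1.trans h2.symm)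
      | exact hik (h1.trans h3.symm)
      | exact hjk (h2.trans h3.symm)

lemma perm_adj (σ : Equiv.Perm (Fin n)) {k l : Fin n} (hkl : (k:ℕ)+1 = (l:ℕ)) :
    (permutahedron n).Adj σ (σ * Equiv.swap k l) := by
  have hne : k ≠ l := fun h => by rw [h] at hkl; omega
  unfold permutahedron
  rw [SimpleGraph.fromRel_adj]
  refine ⟨?_, Or.inl ⟨k, l, hkl, rfl⟩⟩
  intro h
  exact swap_ne_one hne (left_eq_mul.mp h)

lemma perm_not_adj (σ w : Equiv.Perm (Fin n)) (hw : ∀ p q : Fin n, w ≠ Equiv.swap p q) :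
    ¬ (permutahedron n).Adj σ (σ * w) := by
  unfold permutahedron
  rw [SimpleGraph.fromRel_adj]
  rintro ⟨-, ⟨p, q, -, h⟩ | ⟨p, q, -, h⟩⟩
  · exact hw p q (mul_left_cancel h)
  · rw [mul_assoc] at h
    have h2 : w * Equiv.swap p q = 1 := left_eq_mul.mp h
    have h3 : w = (Equiv.swap p q)⁻¹ := eq_inv_of_mul_eq_one_left h2
    rw [Equiv.swap_inv] at h3
    exact hw p q h3

end Stmt3Aux


namespace Stmt3Aux

lemma key_inter {G : Type*} [Group G] (σ A B B' : G) (hA : A ≠ 1) (hB : B ≠ 1) (hB' : B' ≠ 1)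
    (hAB : A ≠ B) (hAB' : A ≠ B') (hBB' : B ≠ B') (hABone : A * B ≠ 1) (hAB'one : A * B' ≠ 1)
    (hABB' : A * B ≠ B') (hAB'B : A * B' ≠ B) :
    ({s(σ, σ*A), s(σ*A, σ*(A*B)), s(σ*(A*B), σ*B), s(σ*B, σ)} ∩
     {s(σ, σ*A), s(σ*A, σ*(A*B')), s(σ*(A*B'), σ*B'), s(σ*B', σ)} : Set (Sym2 G))
      = {s(σ, σ*A)} := by
  ext x
  simp only [Set.mem_inter_iff, Set.mem_insert_iff, Set.mem_singleton_iff]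
  constructor
  · rintro ⟨h1, h2⟩
    rcases h1 with rfl | rfl | rfl | rfl
    · rfl
    all_goals
      rcases h2 with h | h | h | h <;>
      first
        | exact h
        | · exfalso
            rw [Sym2.eq_iff] at h
            rcases h with ⟨ha, hb⟩ | ⟨ha, hb⟩ <;>
            · try simp only [mul_right_inj, mul_eq_left, left_eq_mul] at ha
              try simp only [mul_right_inj, mul_eq_left, left_eq_mul] at hb
              first
                | exact hA ha | exact hA hb | exact hA ha.symm | exact hA hb.symm
                | exact hB ha | exact hB hb | exact hB ha.symm | exact hB hb.symm
                | exact hB' ha | exact hB' hb | exact hB' ha.symm | exact hB' hb.symm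
                | exact hAB ha | exact hAB hb | exact hAB ha.symm | exact hAB hb.symm
                | exact hAB' ha | exact hAB' hb | exact hAB' ha.symm | exact hAB' hb.symm
                | exact hBB' ha | exact hBB' hb | exact hBB' ha.symm | exact hBB' hb.symm
                | exact hABone ha | exact hABone hb | exact hABone ha.symm | exact hABone hb.symm
                | exact hAB'one ha | exact hAB'one hb | exact hAB'one ha.symm | exact hAB'one hb.symm
                | exact hABB' ha | exact hABB' hb | exact hABB' ha.symm | exact hABB' hb.symm
                | exact hAB'B ha | exact hAB'B hb | exact hAB'B ha.symm | exact hAB'B hb.symm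
  · rintro rfl
    exact ⟨Or.inl rfl, Or.inl rfl⟩

end Stmt3Aux
namespace Stmt3Aux

variable {n : ℕ}

def cyc (σ : Equiv.Perm (Fin n)) (i j k l : Fin n) : Set (Sym2 (Equiv.Perm (Fin n))) :=
  {s(σ, σ * Equiv.swap i j), s(σ * Equiv.swap i j, σ * (Equiv.swap i j * Equiv.swap k l)),
   s(σ * (Equiv.swap i j * Equiv.swap k l), σ * Equiv.swap k l), s(σ * Equiv.swap k l, σ)}

lemma prod_ne_one {i j k l : Fin n} (hij : i ≠ j) (hik : i ≠ k) (hil : i ≠ l) :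
    Equiv.swap i j * Equiv.swap k l ≠ 1 := by
  intro h
  have h3 : Equiv.swap i j = (Equiv.swap k l)⁻¹ := eq_inv_of_mul_eq_one_left h
  rw [Equiv.swap_inv] at h3
  exact swap_ne_swap hij hik hil h3

lemma cyc_is (σ : Equiv.Perm (Fin n)) (i j k l : Fin n) (hij : (i:ℕ)+1 = (j:ℕ))
    (hkl : (k:ℕ)+1 = (l:ℕ)) (hd : (k:ℕ)+1 < (i:ℕ) ∨ (i:ℕ)+1 < (k:ℕ)) :
    IsInduced4Cycle (permutahedron n) (cyc σ i j k l) := by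
  have hij' : i ≠ j := Fin.ne_of_val_ne (by omega)
  have hkl' : k ≠ l := Fin.ne_of_val_ne (by omega)
  have hik : i ≠ k := Fin.ne_of_val_ne (by omega)
  have hil : i ≠ l := Fin.ne_of_val_ne (by omega)
  have hjk : j ≠ k := Fin.ne_of_val_ne (by omega)
  have hjl : j ≠ l := Fin.ne_of_val_ne (by omega)
  have hcomm : Equiv.swap i j * Equiv.swap k l = Equiv.swap k l * Equiv.swap i j :=
    swap_comm hik hil hjk hjl
  refine ⟨σ, σ * Equiv.swap i j, σ * (Equiv.swap i j * Equiv.swap k l), σ * Equiv.swap k l,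
    ?_, ?_, ?_, ?_, ?_, ?_, ?_, ?_, rfl⟩
  · intro h
    exact prod_ne_one hij' hik hil (left_eq_mul.mp h)
  · intro h
    exact swap_ne_swap hij' hik hil (mul_left_cancel h)
  · exact perm_adj σ hij
  · have := perm_adj (σ * Equiv.swap i j) hkl
    rwa [mul_assoc] at this
  · have := (perm_adj (σ * Equiv.swap k l) hij).symm
    rwa [mul_assoc, ← hcomm] at this
  · have := perm_adj (σ * Equiv.swap k l) hkl
    rwa [mul_assoc, Equiv.swap_mul_self, mul_one] at this
  · exact perm_not_adj σ _ (fun p q => prod_ne_swap hij' hik hil hjk hjl hkl' p q)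
  · have := perm_not_adj (σ * Equiv.swap i j) (Equiv.swap i j * Equiv.swap k l)
      (fun p q => prod_ne_swap hij' hik hil hjk hjl hkl' p q)
    have h3 : σ * Equiv.swap i j * (Equiv.swap i j * Equiv.swap k l) = σ * Equiv.swap k l := by
      rw [← mul_assoc, mul_assoc σ, Equiv.swap_mul_self, mul_one]
    rwa [h3] at this

lemma cyc_inter (σ : Equiv.Perm (Fin n)) (i j k l k' l' : Fin n) (hij : (i:ℕ)+1 = (j:ℕ))
    (hkl : (k:ℕ)+1 = (l:ℕ)) (hk'l' : (k':ℕ)+1 = (l':ℕ))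
    (hd : (k:ℕ)+1 < (i:ℕ) ∨ (i:ℕ)+1 < (k:ℕ)) (hd' : (k':ℕ)+1 < (i:ℕ) ∨ (i:ℕ)+1 < (k':ℕ))
    (hkk' : k ≠ k') :
    cyc σ i j k l ∩ cyc σ i j k' l' = {s(σ, σ * Equiv.swap i j)} := by
  have hij' : i ≠ j := Fin.ne_of_val_ne (by omega)
  have hkl' : k ≠ l := Fin.ne_of_val_ne (by omega)
  have hk'l'' : k' ≠ l' := Fin.ne_of_val_ne (by omega)
  have hik : i ≠ k := Fin.ne_of_val_ne (by omega)
  have hil : i ≠ l := Fin.ne_of_val_ne (by omega)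
  have hjk : j ≠ k := Fin.ne_of_val_ne (by omega)
  have hjl : j ≠ l := Fin.ne_of_val_ne (by omega)
  have hik' : i ≠ k' := Fin.ne_of_val_ne (by omega)
  have hil' : i ≠ l' := Fin.ne_of_val_ne (by omega)
  have hjk' : j ≠ k' := Fin.ne_of_val_ne (by omega)
  have hjl' : j ≠ l' := Fin.ne_of_val_ne (by omega)
  exact key_inter σ (Equiv.swap i j) (Equiv.swap k l) (Equiv.swap k' l')
    (swap_ne_one hij') (swap_ne_one hkl') (swap_ne_one hk'l'')
    (swap_ne_swap hij' hik hil) (swap_ne_swap hij' hik' hil')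
    (adjswap_ne hkl hk'l' hkk')
    (prod_ne_one hij' hik hil) (prod_ne_one hij' hik' hil')
    (prod_ne_swap hij' hik hil hjk hjl hkl' k' l')
    (prod_ne_swap hij' hik' hil' hjk' hjl' hk'l'' k l)

lemma cyc_ne (σ : Equiv.Perm (Fin n)) (i j k l k' l' : Fin n) (hij : (i:ℕ)+1 = (j:ℕ))
    (hkl : (k:ℕ)+1 = (l:ℕ)) (hk'l' : (k':ℕ)+1 = (l':ℕ))
    (hd : (k:ℕ)+1 < (i:ℕ) ∨ (i:ℕ)+1 < (k:ℕ)) (hd' : (k':ℕ)+1 < (i:ℕ) ∨ (i:ℕ)+1 < (k':ℕ))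
    (hkk' : k ≠ k') : cyc σ i j k l ≠ cyc σ i j k' l' := by
  intro h
  have hint := cyc_inter σ i j k l k' l' hij hkl hk'l' hd hd' hkk'
  rw [h, Set.inter_self] at hint
  have hm : s(σ * Equiv.swap k' l', σ) ∈ cyc σ i j k' l' := by
    simp only [cyc, Set.mem_insert_iff, Set.mem_singleton_iff]
    tauto
  rw [hint, Set.mem_singleton_iff, Sym2.eq_iff] at hm
  have hij' : i ≠ j := Fin.ne_of_val_ne (by omega)
  have hk'l'' : k' ≠ l' := Fin.ne_of_val_ne (by omega)
  have hik' : i ≠ k' := Fin.ne_of_val_ne (by omega)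
  have hil' : i ≠ l' := Fin.ne_of_val_ne (by omega)
  rcases hm with ⟨h1, h2⟩ | ⟨h1, h2⟩
  · exact swap_ne_one hk'l'' (mul_eq_left.mp h1)
  · exact swap_ne_swap hij' hik' hil' (mul_left_cancel h1).symm

lemma main (σ : Equiv.Perm (Fin n)) (i j : Fin n) (hij : (i:ℕ)+1 = (j:ℕ)) :
    ∃ 𝒞 : Set (Set (Sym2 (Equiv.Perm (Fin n)))),
      n - 4 ≤ 𝒞.ncard ∧
      (∀ C ∈ 𝒞, IsInduced4Cycle (permutahedron n) C ∧ s(σ, σ * Equiv.swap i j) ∈ C) ∧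
      ∀ C ∈ 𝒞, ∀ C' ∈ 𝒞, C ≠ C' → C ∩ C' = {s(σ, σ * Equiv.swap i j)} := by
  have hin : (i:ℕ) + 1 < n := by rw [hij]; exact j.isLt
  have hkv1 : ∀ m : Fin (n-4),
      (if (m:ℕ) + 2 ≤ (i:ℕ) then (m:ℕ) else (m:ℕ) + 3) + 1 < n := by
    intro m; have hm := m.isLt; split <;> omega
  set kv : Fin (n-4) → ℕ := fun m => if (m:ℕ) + 2 ≤ (i:ℕ) then (m:ℕ) else (m:ℕ) + 3 with hkv
  have hkv1' : ∀ m : Fin (n-4), kv m + 1 < n := hkv1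
  have hkvd : ∀ m : Fin (n-4), kv m + 1 < (i:ℕ) ∨ (i:ℕ) + 1 < kv m := by
    intro m; simp only [hkv]; split <;> omega
  have hkvinj : ∀ m m' : Fin (n-4), kv m = kv m' → m = m' := by
    intro m m' h; simp only [hkv] at h; apply Fin.ext; split_ifs at h <;> omega
  set K : Fin (n-4) → Fin n := fun m => ⟨kv m, by have := hkv1' m; omega⟩ with hK
  set L : Fin (n-4) → Fin n := fun m => ⟨kv m + 1, hkv1' m⟩ with hL
  have hKL : ∀ m, ((K m : ℕ)) + 1 = (L m : ℕ) := fun m => rfl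
  have hKd : ∀ m, ((K m : ℕ)) + 1 < (i:ℕ) ∨ (i:ℕ) + 1 < (K m : ℕ) := hkvd
  refine ⟨Set.range (fun m => cyc σ i j (K m) (L m)), ?_, ?_, ?_⟩
  · have hinj : Function.Injective (fun m => cyc σ i j (K m) (L m)) := by
      intro m m' h
      by_contra hne
      have hKne : K m ≠ K m' := fun hh => hne (hkvinj m m' (congrArg Fin.val hh))
      exact cyc_ne σ i j _ _ _ _ hij (hKL m) (hKL m') (hKd m) (hKd m') hKne h
    rw [← Set.image_univ, Set.ncard_image_of_injective _ hinj, Set.ncard_univ,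
      Nat.card_eq_fintype_card, Fintype.card_fin]
  · rintro C ⟨m, rfl⟩
    exact ⟨cyc_is σ i j (K m) (L m) hij (hKL m) (hKd m), Set.mem_insert _ _⟩
  · rintro C ⟨m, rfl⟩ C' ⟨m', rfl⟩ hne
    have hKne : K m ≠ K m' := fun hh => hne (by
      have : m = m' := hkvinj m m' (congrArg Fin.val hh)
      rw [this])
    exact cyc_inter σ i j _ _ _ _ hij (hKL m) (hKL m') (hKd m) (hKd m') hKne

end Stmt3Aux


/-- the permutahedron `Π_n` is `(n−4)`-heavy. -/
theorem stmt3 (n : ℕ) : IsHeavy (permutahedron n) (n - 4) := by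
  intro e he
  induction e using Sym2.ind with
  | _ u v =>
    rw [SimpleGraph.mem_edgeSet] at he
    unfold permutahedron at he
    rw [SimpleGraph.fromRel_adj] at he
    obtain ⟨hne, h | h⟩ := he
    · obtain ⟨i, j, hij, rfl⟩ := h
      exact Stmt3Aux.main u i j hij
    · obtain ⟨i, j, hij, h⟩ := h
      rw [h, Sym2.eq_swap]
      exact Stmt3Aux.main v i j hij
end

section
/- The permutahedron Π_n admits a maximal matching of cardinality exactly n!/3 (for n ≥ 3). -/
namespace Stmt5Aux

variable {m : ℕ}

def q0 : Fin (m+3) := ⟨0, by omega⟩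
def q1 : Fin (m+3) := ⟨1, by omega⟩
def q2 : Fin (m+3) := ⟨2, by omega⟩

lemma hq01 : (q0 : Fin (m+3)) ≠ q1 := by simp [q0, q1, Fin.ext_iff]
lemma hq02 : (q0 : Fin (m+3)) ≠ q2 := by simp [q0, q2, Fin.ext_iff]
lemma hq12 : (q1 : Fin (m+3)) ≠ q2 := by simp [q1, q2, Fin.ext_iff]

def invSet (σ : Equiv.Perm (Fin (m+3))) : Finset (Fin (m+3) × Fin (m+3)) :=
  Finset.univ.filter (fun p => p.1 < p.2 ∧ σ p.2 < σ p.1)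

def invCount (σ : Equiv.Perm (Fin (m+3))) : ℕ := (invSet σ).card

lemma swap_lt {i j a b : Fin (m+3)} (hij : (i:ℕ)+1 = (j:ℕ)) (hab : a < b)
    (h : ¬(a = i ∧ b = j)) : Equiv.swap i j a < Equiv.swap i j b := by
  have hv : (a:ℕ) < (b:ℕ) := hab
  rcases eq_or_ne a i with rfl | hai
  · rcases eq_or_ne b j with rfl | hbj
    · exact absurd ⟨rfl, rfl⟩ h
    · have hbi : b ≠ a := (Fin.lt_def.2 hv).ne'
      rw [Equiv.swap_apply_left, Equiv.swap_apply_of_ne_of_ne hbi hbj]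
      have h1 : (b:ℕ) ≠ (j:ℕ) := fun hh => hbj (Fin.ext hh)
      rw [Fin.lt_def]; omega
  · rcases eq_or_ne a j with rfl | haj
    · have hbi : b ≠ i := fun hh => by
        have : (b:ℕ) = (i:ℕ) := by rw [hh]
        omega
      have hbj : b ≠ a := (Fin.lt_def.2 hv).ne'
      rw [Equiv.swap_apply_right, Equiv.swap_apply_of_ne_of_ne hbi hbj]
      rw [Fin.lt_def]; omega
    · have hai' : (a:ℕ) ≠ (i:ℕ) := fun hh => hai (Fin.ext hh)
      have haj' : (a:ℕ) ≠ (j:ℕ) := fun hh => haj (Fin.ext hh)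
      rw [Equiv.swap_apply_of_ne_of_ne hai haj]
      rcases eq_or_ne b i with rfl | hbi
      · rw [Equiv.swap_apply_left, Fin.lt_def]; omega
      · rcases eq_or_ne b j with rfl | hbj
        · rw [Equiv.swap_apply_right, Fin.lt_def]; omega
        · rw [Equiv.swap_apply_of_ne_of_ne hbi hbj]; exact hab

lemma invCount_swap {σ : Equiv.Perm (Fin (m+3))} {i j : Fin (m+3)}
    (hij : (i:ℕ)+1 = (j:ℕ)) (h : σ i < σ j) :
    invCount (σ * Equiv.swap i j) = invCount σ + 1 := by
  classical
  have hs : ∀ x : Fin (m+3), Equiv.swap i j (Equiv.swap i j x) = x := Equiv.swap_apply_self i j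
  set s := Equiv.swap i j with hsdef
  have hijlt : i < j := by rw [Fin.lt_def]; omega
  have hset : invSet (σ * s) = insert (i,j) ((invSet σ).image (fun p => (s p.1, s p.2))) := by
    ext ⟨a,b⟩
    simp only [invSet, Finset.mem_insert, Finset.mem_image, Finset.mem_filter,
      Finset.mem_univ, true_and, Prod.mk.injEq, Prod.exists]
    simp only [Equiv.Perm.mul_apply]
    constructor
    · rintro ⟨hab, hinv⟩
      by_cases hcase : a = i ∧ b = j
      · exact Or.inl hcase
      · refine Or.inr ⟨s a, s b, ⟨swap_lt hij hab hcase, ?_⟩, ?_, ?_⟩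
        · exact hinv
        · exact hs a
        · exact hs b
    · rintro (⟨rfl, rfl⟩ | ⟨u, v, ⟨huv, hinv⟩, hu, hv⟩)
      · refine ⟨hijlt, ?_⟩
        rw [hsdef, Equiv.swap_apply_left, Equiv.swap_apply_right]
        exact h
      · have hne : ¬(u = i ∧ v = j) := by
          rintro ⟨rfl, rfl⟩
          exact absurd h (not_lt.2 hinv.le)
        subst hu hv
        refine ⟨swap_lt hij huv hne, ?_⟩
        rwa [hs, hs]
  have hnotmem : (i,j) ∉ (invSet σ).image (fun p => (s p.1, s p.2)) := by
    simp only [Finset.mem_image, Prod.exists, Prod.mk.injEq, invSet, Finset.mem_filter,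
      Finset.mem_univ, true_and]
    rintro ⟨u, v, ⟨huv, hinv⟩, hu, hv⟩
    have hu' : u = j := by
      have := congrArg s hu
      rw [hs] at this
      rw [this, hsdef, Equiv.swap_apply_left]
    have hv' : v = i := by
      have := congrArg s hv
      rw [hs] at this
      rw [this, hsdef, Equiv.swap_apply_right]
    subst hu' hv'
    exact absurd huv (not_lt.2 hijlt.le)
  have hinj : Function.Injective (fun p : Fin (m+3) × Fin (m+3) => (s p.1, s p.2)) := by
    rintro ⟨a,b⟩ ⟨c,d⟩ hcd
    simp only [Prod.mk.injEq] at hcd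
    exact Prod.ext (s.injective hcd.1) (s.injective hcd.2)
  rw [invCount, invCount, hset, Finset.card_insert_of_notMem hnotmem,
    Finset.card_image_of_injective _ hinj, Nat.add_comm]

lemma invCount_swap' {σ : Equiv.Perm (Fin (m+3))} {i j : Fin (m+3)}
    (hij : (i:ℕ)+1 = (j:ℕ)) (h : σ j < σ i) :
    invCount σ = invCount (σ * Equiv.swap i j) + 1 := by
  have h2 : (σ * Equiv.swap i j) i < (σ * Equiv.swap i j) j := by
    simp only [Equiv.Perm.mul_apply, Equiv.swap_apply_left, Equiv.swap_apply_right]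
    exact h
  have := invCount_swap hij h2
  rw [mul_assoc, Equiv.swap_mul_self, mul_one] at this
  exact this


def Rnk (σ : Equiv.Perm (Fin (m+3))) (y : Fin (m+3)) : ℕ :=
  (if σ q0 < y then 1 else 0) + (if σ q1 < y then 1 else 0) + (if σ q2 < y then 1 else 0)

def Inv3 (σ : Equiv.Perm (Fin (m+3))) : ℕ :=
  (if σ q1 < σ q0 then 1 else 0) + (if σ q2 < σ q0 then 1 else 0) + (if σ q2 < σ q1 then 1 else 0)

def Bv (σ : Equiv.Perm (Fin (m+3))) : ZMod 3 :=
  (invCount σ : ZMod 3) - (Inv3 σ : ZMod 3)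

def Phi (σ : Equiv.Perm (Fin (m+3))) : ZMod 3 :=
  (Rnk σ (σ q1) : ZMod 3) + Bv σ

lemma mul_swap_left (σ : Equiv.Perm (Fin (m+3))) (x y : Fin (m+3)) :
    (σ * Equiv.swap x y) x = σ y := by
  rw [Equiv.Perm.mul_apply, Equiv.swap_apply_left]

lemma mul_swap_right (σ : Equiv.Perm (Fin (m+3))) (x y : Fin (m+3)) :
    (σ * Equiv.swap x y) y = σ x := by
  rw [Equiv.Perm.mul_apply, Equiv.swap_apply_right]

lemma mul_swap_other (σ : Equiv.Perm (Fin (m+3))) {x y z : Fin (m+3)}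
    (h1 : z ≠ x) (h2 : z ≠ y) : (σ * Equiv.swap x y) z = σ z := by
  rw [Equiv.Perm.mul_apply, Equiv.swap_apply_of_ne_of_ne h1 h2]

lemma Rnk_lt {σ : Equiv.Perm (Fin (m+3))} {y z : Fin (m+3)}
    (hy : y = σ q0 ∨ y = σ q1 ∨ y = σ q2) (hyz : y < z) : Rnk σ y < Rnk σ z := by
  rw [Fin.lt_def] at hyz
  rcases hy with rfl|rfl|rfl <;>
    (simp only [Rnk, Fin.lt_def]; split_ifs <;> omega)

lemma Rnk_le {σ : Equiv.Perm (Fin (m+3))} {y : Fin (m+3)}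
    (hy : y = σ q0 ∨ y = σ q1 ∨ y = σ q2) : Rnk σ y ≤ 2 := by
  rcases hy with rfl|rfl|rfl <;>
    (simp only [Rnk, Fin.lt_def]; split_ifs <;> omega)

lemma Rnk_ne {σ : Equiv.Perm (Fin (m+3))} {y z : Fin (m+3)}
    (hy : y = σ q0 ∨ y = σ q1 ∨ y = σ q2) (hz : z = σ q0 ∨ z = σ q1 ∨ z = σ q2)
    (hne : y ≠ z) : (Rnk σ y : ZMod 3) ≠ (Rnk σ z : ZMod 3) := by
  have h1 : Rnk σ y ≠ Rnk σ z := by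
    rcases hne.lt_or_gt with h|h
    · exact (Rnk_lt hy h).ne
    · exact (Rnk_lt hz h).ne'
  intro hc
  have h2 := congrArg ZMod.val hc
  rw [ZMod.val_cast_of_lt (by have := Rnk_le (σ := σ) hy; omega),
    ZMod.val_cast_of_lt (by have := Rnk_le (σ := σ) hz; omega)] at h2
  exact h1 h2


lemma val_q0 : ((q0 : Fin (m+3)) : ℕ) = 0 := rfl
lemma val_q1 : ((q1 : Fin (m+3)) : ℕ) = 1 := rfl
lemma val_q2 : ((q2 : Fin (m+3)) : ℕ) = 2 := rfl

lemma R01 (σ : Equiv.Perm (Fin (m+3))) (y : Fin (m+3)) :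
    Rnk (σ * Equiv.swap q0 q1) y = Rnk σ y := by
  simp only [Rnk, mul_swap_left, mul_swap_right,
    mul_swap_other σ hq02.symm hq12.symm]
  ring

lemma R12 (σ : Equiv.Perm (Fin (m+3))) (y : Fin (m+3)) :
    Rnk (σ * Equiv.swap q1 q2) y = Rnk σ y := by
  simp only [Rnk, mul_swap_left, mul_swap_right,
    mul_swap_other σ hq01 hq02]
  ring

lemma B01 (σ : Equiv.Perm (Fin (m+3))) : Bv (σ * Equiv.swap q0 q1) = Bv σ := by
  have e0 := mul_swap_left σ (q0 : Fin (m+3)) q1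
  have e1 := mul_swap_right σ (q0 : Fin (m+3)) q1
  have e2 : (σ * Equiv.swap (q0 : Fin (m+3)) q1) q2 = σ q2 := mul_swap_other σ hq02.symm hq12.symm
  have hne : σ q0 ≠ σ q1 := fun hc => hq01 (σ.injective hc)
  have hij : ((q0 : Fin (m+3)) : ℕ) + 1 = ((q1 : Fin (m+3)) : ℕ) := rfl
  have d01 : ((σ q0 : Fin (m+3)) : ℕ) ≠ ((σ q1 : Fin (m+3)) : ℕ) := fun hc => hne (Fin.ext hc)
  rcases hne.lt_or_gt with h|h
  · have hinv := invCount_swap hij h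
    have hv : ((σ q0 : Fin (m+3)) : ℕ) < ((σ q1 : Fin (m+3)) : ℕ) := h
    simp only [Bv, Inv3, e0, e1, e2, hinv, Fin.lt_def]
    push_cast [apply_ite (Nat.cast : ℕ → ZMod 3)]
    split_ifs <;> first
      | (exfalso; omega)
      | (generalize ((invCount σ : ℕ) : ZMod 3) = z; revert z; decide)
  · have hinv := invCount_swap' hij h
    have hv : ((σ q1 : Fin (m+3)) : ℕ) < ((σ q0 : Fin (m+3)) : ℕ) := h
    rw [Bv, Bv, hinv]
    simp only [Inv3, e0, e1, e2, Fin.lt_def]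
    push_cast [apply_ite (Nat.cast : ℕ → ZMod 3)]
    split_ifs <;> first
      | (exfalso; omega)
      | (generalize ((invCount (σ * Equiv.swap q0 q1) : ℕ) : ZMod 3) = z; revert z; decide)

lemma B12 (σ : Equiv.Perm (Fin (m+3))) : Bv (σ * Equiv.swap q1 q2) = Bv σ := by
  have e0 : (σ * Equiv.swap (q1 : Fin (m+3)) q2) q0 = σ q0 := mul_swap_other σ hq01 hq02
  have e1 := mul_swap_left σ (q1 : Fin (m+3)) q2
  have e2 := mul_swap_right σ (q1 : Fin (m+3)) q2
  have hne : σ q1 ≠ σ q2 := fun hc => hq12 (σ.injective hc)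
  have hij : ((q1 : Fin (m+3)) : ℕ) + 1 = ((q2 : Fin (m+3)) : ℕ) := rfl
  have d12 : ((σ q1 : Fin (m+3)) : ℕ) ≠ ((σ q2 : Fin (m+3)) : ℕ) := fun hc => hne (Fin.ext hc)
  rcases hne.lt_or_gt with h|h
  · have hinv := invCount_swap hij h
    have hv : ((σ q1 : Fin (m+3)) : ℕ) < ((σ q2 : Fin (m+3)) : ℕ) := h
    simp only [Bv, Inv3, e0, e1, e2, hinv, Fin.lt_def]
    push_cast [apply_ite (Nat.cast : ℕ → ZMod 3)]
    split_ifs <;> first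
      | (exfalso; omega)
      | (generalize ((invCount σ : ℕ) : ZMod 3) = z; revert z; decide)
  · have hinv := invCount_swap' hij h
    have hv : ((σ q2 : Fin (m+3)) : ℕ) < ((σ q1 : Fin (m+3)) : ℕ) := h
    rw [Bv, Bv, hinv]
    simp only [Inv3, e0, e1, e2, Fin.lt_def]
    push_cast [apply_ite (Nat.cast : ℕ → ZMod 3)]
    split_ifs <;> first
      | (exfalso; omega)
      | (generalize ((invCount (σ * Equiv.swap q1 q2) : ℕ) : ZMod 3) = z; revert z; decide)

lemma Phi01 (σ : Equiv.Perm (Fin (m+3))) :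
    Phi (σ * Equiv.swap q0 q1) = (Rnk σ (σ q0) : ZMod 3) + Bv σ := by
  rw [Phi, mul_swap_right, R01, B01]

lemma Phi12 (σ : Equiv.Perm (Fin (m+3))) :
    Phi (σ * Equiv.swap q1 q2) = (Rnk σ (σ q2) : ZMod 3) + Bv σ := by
  rw [Phi, mul_swap_left, R12, B12]

/-- the 3-cycle on the first three positions -/
def cc : Equiv.Perm (Fin (m+3)) := Equiv.swap q0 q1 * Equiv.swap q1 q2

lemma Rc (σ : Equiv.Perm (Fin (m+3))) (y : Fin (m+3)) :
    Rnk (σ * cc) y = Rnk σ y := by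
  rw [cc, ← mul_assoc, R12, R01]

lemma Bc (σ : Equiv.Perm (Fin (m+3))) : Bv (σ * cc) = Bv σ := by
  rw [cc, ← mul_assoc, B12, B01]

lemma cc_q1 (σ : Equiv.Perm (Fin (m+3))) : (σ * cc : Equiv.Perm (Fin (m+3))) q1 = σ q2 := by
  show (σ * ((Equiv.swap q0 q1 : Equiv.Perm (Fin (m+3))) * Equiv.swap q1 q2) : Equiv.Perm (Fin (m+3))) q1 = σ q2
  rw [← mul_assoc, mul_swap_left, mul_swap_other σ hq02.symm hq12.symm]

lemma cc_q2 (σ : Equiv.Perm (Fin (m+3))) : (σ * cc : Equiv.Perm (Fin (m+3))) q2 = σ q0 := by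
  show (σ * ((Equiv.swap q0 q1 : Equiv.Perm (Fin (m+3))) * Equiv.swap q1 q2) : Equiv.Perm (Fin (m+3))) q2 = σ q0
  rw [← mul_assoc, mul_swap_right, mul_swap_right]

lemma cc_q0 (σ : Equiv.Perm (Fin (m+3))) : (σ * cc : Equiv.Perm (Fin (m+3))) q0 = σ q1 := by
  show (σ * ((Equiv.swap q0 q1 : Equiv.Perm (Fin (m+3))) * Equiv.swap q1 q2) : Equiv.Perm (Fin (m+3))) q0 = σ q1
  rw [← mul_assoc]
  rw [mul_swap_other (σ * Equiv.swap q0 q1) hq01 hq02, mul_swap_left]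

lemma Phic (σ : Equiv.Perm (Fin (m+3))) :
    Phi (σ * cc) = (Rnk σ (σ q2) : ZMod 3) + Bv σ := by
  rw [Phi, cc_q1, Rc, Bc]

lemma Phicc (σ : Equiv.Perm (Fin (m+3))) :
    Phi (σ * cc * cc) = (Rnk σ (σ q0) : ZMod 3) + Bv σ := by
  rw [Phic, cc_q2, Rc, Bc]

lemma Phi_self (σ : Equiv.Perm (Fin (m+3))) :
    Phi σ = (Rnk σ (σ q1) : ZMod 3) + Bv σ := rfl

/-- The key independence lemma: adjacent permutations have different Φ. -/
lemma Phi_ne (σ : Equiv.Perm (Fin (m+3))) (i j : Fin (m+3)) (hij : (i:ℕ)+1 = (j:ℕ)) :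
    Phi (σ * Equiv.swap i j) ≠ Phi σ := by
  have hjlt : (j:ℕ) < m+3 := j.isLt
  have hi4 : (i:ℕ) = 0 ∨ (i:ℕ) = 1 ∨ (i:ℕ) = 2 ∨ 3 ≤ (i:ℕ) := by omega
  have hqi : i ≠ j := fun hc => by rw [hc] at hij; omega
  rcases hi4 with hi|hi|hi|hi
  · -- i = q0, j = q1
    have hieq : i = (q0 : Fin (m+3)) := Fin.ext (by rw [val_q0, hi])
    have hjeq : j = (q1 : Fin (m+3)) := Fin.ext (by rw [val_q1]; omega)
    subst hieq hjeq
    rw [Phi01, Phi_self]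
    intro hc
    exact Rnk_ne (Or.inl rfl) (Or.inr (Or.inl rfl))
      (fun hc2 => hq01 (σ.injective hc2)) (add_right_cancel hc)
  · -- i = q1, j = q2
    have hieq : i = (q1 : Fin (m+3)) := Fin.ext (by rw [val_q1, hi])
    have hjeq : j = (q2 : Fin (m+3)) := Fin.ext (by rw [val_q2]; omega)
    subst hieq hjeq
    rw [Phi12, Phi_self]
    intro hc
    exact Rnk_ne (Or.inr (Or.inr rfl)) (Or.inr (Or.inl rfl))
      (fun hc2 => hq12 (σ.injective hc2).symm) (add_right_cancel hc)
  · -- i = q2, j has value 3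
    have hieq : i = (q2 : Fin (m+3)) := Fin.ext (by rw [val_q2, hi])
    subst hieq
    have hj0 : j ≠ (q0 : Fin (m+3)) := fun hc => by
      rw [hc, val_q0] at hij; omega
    have hj1 : j ≠ (q1 : Fin (m+3)) := fun hc => by
      rw [hc, val_q1] at hij; omega
    have e0 : (σ * Equiv.swap q2 j) q0 = σ q0 := mul_swap_other σ hq02 hj0.symm
    have e1 : (σ * Equiv.swap q2 j) q1 = σ q1 := mul_swap_other σ hq12 hj1.symm
    have e2 := mul_swap_left σ (q2 : Fin (m+3)) j
    have hne : σ q2 ≠ σ j := fun hc => hqi (σ.injective hc)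
    have d2j : ((σ q2 : Fin (m+3)) : ℕ) ≠ ((σ j : Fin (m+3)) : ℕ) := fun hc => hne (Fin.ext hc)
    have hne02 : σ q0 ≠ σ q2 := fun hc => hq02 (σ.injective hc)
    have d02 : ((σ q0 : Fin (m+3)) : ℕ) ≠ ((σ q2 : Fin (m+3)) : ℕ) := fun hc => hne02 (Fin.ext hc)
    have hne0j : σ q0 ≠ σ j := fun hc => hj0 (σ.injective hc).symm
    have d0j : ((σ q0 : Fin (m+3)) : ℕ) ≠ ((σ j : Fin (m+3)) : ℕ) := fun hc => hne0j (Fin.ext hc)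
    rcases hne.lt_or_gt with h|h
    · have hinv := invCount_swap hij h
      have hv : ((σ q2 : Fin (m+3)) : ℕ) < ((σ j : Fin (m+3)) : ℕ) := h
      simp only [Phi, Bv, Rnk, Inv3, e0, e1, e2, hinv, Fin.lt_def]
      push_cast [apply_ite (Nat.cast : ℕ → ZMod 3)]
      split_ifs <;> first
        | (exfalso; omega)
        | (generalize ((invCount σ : ℕ) : ZMod 3) = z; revert z; decide)
    · have hinv := invCount_swap' hij h
      have hv : ((σ j : Fin (m+3)) : ℕ) < ((σ q2 : Fin (m+3)) : ℕ) := h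
      rw [Phi, Phi, Bv, Bv, hinv]
      simp only [Rnk, Inv3, e0, e1, e2, Fin.lt_def]
      push_cast [apply_ite (Nat.cast : ℕ → ZMod 3)]
      split_ifs <;> first
        | (exfalso; omega)
        | (generalize ((invCount (σ * Equiv.swap q2 j) : ℕ) : ZMod 3) = z; revert z; decide)
  · -- 3 ≤ i : first three positions untouched
    have hi0 : (q0 : Fin (m+3)) ≠ i := fun hc => by
      have : ((q0 : Fin (m+3)) : ℕ) = (i:ℕ) := by rw [hc]
      rw [val_q0] at this; omega
    have hi1 : (q1 : Fin (m+3)) ≠ i := fun hc => by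
      have : ((q1 : Fin (m+3)) : ℕ) = (i:ℕ) := by rw [hc]
      rw [val_q1] at this; omega
    have hi2 : (q2 : Fin (m+3)) ≠ i := fun hc => by
      have : ((q2 : Fin (m+3)) : ℕ) = (i:ℕ) := by rw [hc]
      rw [val_q2] at this; omega
    have hj0 : (q0 : Fin (m+3)) ≠ j := fun hc => by
      have : ((q0 : Fin (m+3)) : ℕ) = (j:ℕ) := by rw [hc]
      rw [val_q0] at this; omega
    have hj1 : (q1 : Fin (m+3)) ≠ j := fun hc => by
      have : ((q1 : Fin (m+3)) : ℕ) = (j:ℕ) := by rw [hc]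
      rw [val_q1] at this; omega
    have hj2 : (q2 : Fin (m+3)) ≠ j := fun hc => by
      have : ((q2 : Fin (m+3)) : ℕ) = (j:ℕ) := by rw [hc]
      rw [val_q2] at this; omega
    have e0 : (σ * Equiv.swap i j) q0 = σ q0 := mul_swap_other σ hi0 hj0
    have e1 : (σ * Equiv.swap i j) q1 = σ q1 := mul_swap_other σ hi1 hj1
    have e2 : (σ * Equiv.swap i j) q2 = σ q2 := mul_swap_other σ hi2 hj2
    have hR : Rnk (σ * Equiv.swap i j) ((σ * Equiv.swap i j) q1) = Rnk σ (σ q1) := by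
      simp only [Rnk, e0, e1, e2]
    have hI : Inv3 (σ * Equiv.swap i j) = Inv3 σ := by
      simp only [Inv3, e0, e1, e2]
    have hne : σ i ≠ σ j := fun hc => hqi (σ.injective hc)
    rcases hne.lt_or_gt with h|h
    · have hinv := invCount_swap hij h
      rw [Phi, Phi, Bv, Bv, hR, hI, hinv]
      push_cast
      generalize ((Rnk σ (σ q1) : ℕ) : ZMod 3) = r
      generalize ((invCount σ : ℕ) : ZMod 3) = z
      generalize ((Inv3 σ : ℕ) : ZMod 3) = w
      revert r z w; decide
    · have hinv := invCount_swap' hij h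
      rw [Phi, Phi, Bv, Bv, hR, hI, hinv]
      push_cast
      generalize ((Rnk σ (σ q1) : ℕ) : ZMod 3) = r
      generalize ((invCount (σ * Equiv.swap i j) : ℕ) : ZMod 3) = z
      generalize ((Inv3 σ : ℕ) : ZMod 3) = w
      revert r z w; decide


lemma zmod3_one_of_ne : ∀ u v w : ZMod 3, u ≠ v → v ≠ w → u ≠ w →
    ((if u = 0 then 1 else 0) + (if v = 0 then 1 else 0) + (if w = 0 then 1 else 0) : ℕ) = 1 := by
  decide

lemma tri_ne (σ : Equiv.Perm (Fin (m+3))) :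
    Phi σ ≠ Phi (σ * cc) ∧ Phi (σ * cc) ≠ Phi (σ * cc * cc) ∧ Phi σ ≠ Phi (σ * cc * cc) := by
  rw [Phi_self, Phic, Phicc]
  refine ⟨fun hc => ?_, fun hc => ?_, fun hc => ?_⟩
  · exact Rnk_ne (Or.inr (Or.inl rfl)) (Or.inr (Or.inr rfl))
      (fun hc2 => hq12 (σ.injective hc2)) (add_right_cancel hc)
  · exact Rnk_ne (Or.inr (Or.inr rfl)) (Or.inl rfl)
      (fun hc2 => hq02 (σ.injective hc2).symm) (add_right_cancel hc)
  · exact Rnk_ne (Or.inr (Or.inl rfl)) (Or.inl rfl)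
      (fun hc2 => hq01 (σ.injective hc2).symm) (add_right_cancel hc)

def uncov (m : ℕ) : Finset (Equiv.Perm (Fin (m+3))) :=
  Finset.univ.filter (fun σ => Phi σ = 0)

lemma card_unc : 3 * (uncov m).card = (m+3).factorial := by
  classical
  have hcardP : Fintype.card (Equiv.Perm (Fin (m+3))) = (m+3).factorial := by
    rw [Fintype.card_perm, Fintype.card_fin]
  have hsum : (uncov m).card
      + (Finset.univ.filter (fun σ : Equiv.Perm (Fin (m+3)) => Phi (σ * cc) = 0)).card
      + (Finset.univ.filter (fun σ : Equiv.Perm (Fin (m+3)) => Phi (σ * cc * cc) = 0)).card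
      = (m+3).factorial := by
    rw [uncov, Finset.card_filter, Finset.card_filter, Finset.card_filter,
      ← Finset.sum_add_distrib, ← Finset.sum_add_distrib]
    have h1 : ∀ σ ∈ (Finset.univ : Finset (Equiv.Perm (Fin (m+3)))),
        ((if Phi σ = 0 then 1 else 0) + (if Phi (σ * cc) = 0 then 1 else 0)
          + (if Phi (σ * cc * cc) = 0 then 1 else 0) : ℕ) = 1 := by
      intro σ _
      obtain ⟨h1, h2, h3⟩ := tri_ne σ
      exact zmod3_one_of_ne _ _ _ h1 h2 h3
    rw [Finset.sum_congr rfl h1, Finset.sum_const, smul_eq_mul, mul_one,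
      Finset.card_univ, hcardP]
  have hb1 : (Finset.univ.filter
      (fun σ : Equiv.Perm (Fin (m+3)) => Phi (σ * cc) = 0)).card = (uncov m).card := by
    refine Finset.card_bij' (fun σ _ => σ * cc) (fun τ _ => τ * cc⁻¹) ?_ ?_ ?_ ?_
    · intro a ha
      simp only [Finset.mem_filter, Finset.mem_univ, true_and] at ha
      simp only [uncov, Finset.mem_filter, Finset.mem_univ, true_and]
      exact ha
    · intro a ha
      simp only [uncov, Finset.mem_filter, Finset.mem_univ, true_and] at ha
      simp only [Finset.mem_filter, Finset.mem_univ, true_and]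
      rw [inv_mul_cancel_right]
      exact ha
    · intro a _; exact mul_inv_cancel_right a cc
    · intro a _; exact inv_mul_cancel_right a cc
  have hb2 : (Finset.univ.filter
      (fun σ : Equiv.Perm (Fin (m+3)) => Phi (σ * cc * cc) = 0)).card = (uncov m).card := by
    refine Finset.card_bij' (fun σ _ => σ * cc * cc) (fun τ _ => τ * cc⁻¹ * cc⁻¹) ?_ ?_ ?_ ?_
    · intro a ha
      simp only [Finset.mem_filter, Finset.mem_univ, true_and] at ha
      simp only [uncov, Finset.mem_filter, Finset.mem_univ, true_and]
      exact ha
    · intro a ha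
      simp only [uncov, Finset.mem_filter, Finset.mem_univ, true_and] at ha
      simp only [Finset.mem_filter, Finset.mem_univ, true_and]
      rw [inv_mul_cancel_right, inv_mul_cancel_right]
      exact ha
    · intro a _
      show a * cc * cc * cc⁻¹ * cc⁻¹ = a
      group
    · intro a _
      show a * cc⁻¹ * cc⁻¹ * cc * cc = a
      group
  omega

def partner (σ : Equiv.Perm (Fin (m+3))) : Equiv.Perm (Fin (m+3)) :=
  if Phi (σ * Equiv.swap q0 q1) = 0 then σ * Equiv.swap q1 q2 else σ * Equiv.swap q0 q1

lemma partner_eq_pos {σ : Equiv.Perm (Fin (m+3))} (h : Phi (σ * Equiv.swap q0 q1) = 0) :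
    partner σ = σ * Equiv.swap q1 q2 := if_pos h

lemma partner_eq_neg {σ : Equiv.Perm (Fin (m+3))} (h : ¬ Phi (σ * Equiv.swap q0 q1) = 0) :
    partner σ = σ * Equiv.swap q0 q1 := if_neg h

lemma partner_covered {σ : Equiv.Perm (Fin (m+3))} (h : Phi σ ≠ 0) : Phi (partner σ) ≠ 0 := by
  by_cases hc : Phi (σ * Equiv.swap q0 q1) = 0
  · rw [partner_eq_pos hc, Phi12]
    rw [Phi01] at hc
    intro hc2
    rw [← hc] at hc2
    exact Rnk_ne (Or.inr (Or.inr rfl)) (Or.inl rfl)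
      (fun hc3 => hq02 (σ.injective hc3).symm) (add_right_cancel hc2)
  · rw [partner_eq_neg hc]
    exact hc

lemma partner_partner {σ : Equiv.Perm (Fin (m+3))} (h : Phi σ ≠ 0) :
    partner (partner σ) = σ := by
  by_cases hc : Phi (σ * Equiv.swap q0 q1) = 0
  · rw [partner_eq_pos hc]
    have key : Phi (σ * Equiv.swap q1 q2 * Equiv.swap q0 q1) = 0 := by
      rw [Phi01, mul_swap_other σ hq01 hq02, R12, B12, ← Phi01]
      exact hc
    rw [partner_eq_pos key, mul_assoc, Equiv.swap_mul_self, mul_one]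
  · rw [partner_eq_neg hc]
    have key : ¬ Phi (σ * Equiv.swap q0 q1 * Equiv.swap q0 q1) = 0 := by
      rw [mul_assoc, Equiv.swap_mul_self, mul_one]
      exact h
    rw [partner_eq_neg key, mul_assoc, Equiv.swap_mul_self, mul_one]

lemma partner_ne (σ : Equiv.Perm (Fin (m+3))) : partner σ ≠ σ := by
  by_cases hc : Phi (σ * Equiv.swap q0 q1) = 0
  · rw [partner_eq_pos hc]
    intro h
    have h2 := DFunLike.congr_fun h (q1 : Fin (m+3))
    rw [mul_swap_left] at h2
    exact hq12 (σ.injective h2).symm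
  · rw [partner_eq_neg hc]
    intro h
    have h2 := DFunLike.congr_fun h (q0 : Fin (m+3))
    rw [mul_swap_left] at h2
    exact hq01 (σ.injective h2).symm


lemma partner_adj (σ : Equiv.Perm (Fin (m+3))) :
    (permutahedron (m+3)).Adj σ (partner σ) := by
  rw [permutahedron, SimpleGraph.fromRel_adj]
  refine ⟨(partner_ne σ).symm, Or.inl ?_⟩
  by_cases hc : Phi (σ * Equiv.swap q0 q1) = 0
  · rw [partner_eq_pos hc]
    exact ⟨q1, q2, rfl, rfl⟩
  · rw [partner_eq_neg hc]
    exact ⟨q0, q1, rfl, rfl⟩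

lemma unc_not_adj {a b : Equiv.Perm (Fin (m+3))} (ha : Phi a = 0) (hb : Phi b = 0) :
    ¬ (permutahedron (m+3)).Adj a b := by
  rw [permutahedron, SimpleGraph.fromRel_adj]
  rintro ⟨hne, (⟨i, j, hij, rfl⟩ | ⟨i, j, hij, rfl⟩)⟩
  · exact Phi_ne a i j hij (hb.trans ha.symm)
  · exact Phi_ne b i j hij (ha.trans hb.symm)

def coveredSet (m : ℕ) : Finset (Equiv.Perm (Fin (m+3))) :=
  Finset.univ.filter (fun σ => ¬ Phi σ = 0)

def matchingF (m : ℕ) : Finset (Sym2 (Equiv.Perm (Fin (m+3)))) :=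
  (coveredSet m).image (fun σ => s(σ, partner σ))

lemma mem_edge_pair {σ v : Equiv.Perm (Fin (m+3))} (h : Phi σ ≠ 0)
    (hv : v ∈ s(σ, partner σ)) :
    Phi v ≠ 0 ∧ s(v, partner v) = s(σ, partner σ) := by
  rcases Sym2.mem_iff.1 hv with rfl | rfl
  · exact ⟨h, rfl⟩
  · refine ⟨partner_covered h, ?_⟩
    rw [partner_partner h]
    exact Sym2.eq_swap

lemma covered_card : (coveredSet m).card = 2 * (matchingF m).card := by
  classical
  rw [Finset.card_eq_sum_card_fiberwise
    (f := fun σ => s(σ, partner σ)) (t := matchingF m)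
    (fun σ hσ => Finset.mem_image_of_mem _ hσ)]
  have hfib : ∀ e ∈ matchingF m,
      ((coveredSet m).filter (fun σ => s(σ, partner σ) = e)).card = 2 := by
    intro e he
    obtain ⟨σ0, hσ0C, rfl⟩ := Finset.mem_image.1 he
    have hσ0 : Phi σ0 ≠ 0 := by
      simpa [coveredSet] using hσ0C
    have hset : (coveredSet m).filter (fun σ => s(σ, partner σ) = s(σ0, partner σ0))
        = {σ0, partner σ0} := by
      ext τ
      simp only [coveredSet, Finset.mem_filter, Finset.mem_univ, true_and,
        Finset.mem_insert, Finset.mem_singleton]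
      constructor
      · rintro ⟨hτ, heq⟩
        rcases Sym2.eq_iff.1 heq with ⟨rfl, -⟩ | ⟨h1, -⟩
        · exact Or.inl rfl
        · exact Or.inr h1
      · rintro (rfl | rfl)
        · exact ⟨hσ0, rfl⟩
        · refine ⟨partner_covered hσ0, ?_⟩
          rw [partner_partner hσ0]
          exact Sym2.eq_swap
    rw [hset, Finset.card_insert_of_notMem (by
      simp only [Finset.mem_singleton]
      exact (partner_ne σ0).symm), Finset.card_singleton]
  rw [Finset.sum_congr rfl hfib, Finset.sum_const, smul_eq_mul, mul_comm]

lemma matchingF_card : (matchingF m).card * 3 = (m+3).factorial := by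
  classical
  have h1 := card_unc (m := m)
  have h2 := covered_card (m := m)
  have h3 : (uncov m).card + (coveredSet m).card = (m+3).factorial := by
    have h4 := Finset.card_filter_add_card_filter_not
      (s := (Finset.univ : Finset (Equiv.Perm (Fin (m+3)))))
      (p := fun σ => Phi σ = 0)
    rw [Finset.card_univ, Fintype.card_perm, Fintype.card_fin] at h4
    simpa [uncov, coveredSet] using h4
  omega

end Stmt5Aux

/-- for `n ≥ 3`, the permutahedron `Π_n` admits a maximal matching of
cardinality exactly `n!/3`. -/
theorem stmt5 (n : ℕ) (hn : 3 ≤ n) :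
    ∃ M : Set (Sym2 (Equiv.Perm (Fin n))),
      IsMaximalMatching (permutahedron n) M ∧ M.ncard * 3 = n.factorial := by
  classical
  obtain ⟨m, rfl⟩ : ∃ m, n = m + 3 := ⟨n - 3, by omega⟩
  refine ⟨(Stmt5Aux.matchingF m : Set (Sym2 (Equiv.Perm (Fin (m+3))))), ⟨⟨?_, ?_⟩, ?_⟩, ?_⟩
  · -- M ⊆ edgeSet
    intro e he
    obtain ⟨σ, hσ, rfl⟩ := Finset.mem_image.1 (by exact_mod_cast he)
    exact (SimpleGraph.mem_edgeSet (permutahedron (m+3))).2 (Stmt5Aux.partner_adj σ)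
  · -- pairwise disjoint
    intro e he f hf hef v hve hvf
    obtain ⟨σ1, hσ1, rfl⟩ := Finset.mem_image.1 (by exact_mod_cast he)
    obtain ⟨σ2, hσ2, rfl⟩ := Finset.mem_image.1 (by exact_mod_cast hf)
    have h1 : Stmt5Aux.Phi σ1 ≠ 0 := by simpa [Stmt5Aux.coveredSet] using hσ1
    have h2 : Stmt5Aux.Phi σ2 ≠ 0 := by simpa [Stmt5Aux.coveredSet] using hσ2
    obtain ⟨-, he1⟩ := Stmt5Aux.mem_edge_pair h1 hve
    obtain ⟨-, he2⟩ := Stmt5Aux.mem_edge_pair h2 hvf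
    exact hef (he1.symm.trans he2)
  · -- maximality
    intro M' hM' hsub
    refine Set.Subset.antisymm ?_ hsub
    intro e he
    induction e using Sym2.ind with
    | _ a b =>
      have hadj : (permutahedron (m+3)).Adj a b :=
        (SimpleGraph.mem_edgeSet (permutahedron (m+3))).1 (hM'.1 he)
      by_cases ha : Stmt5Aux.Phi a = 0
      · by_cases hb : Stmt5Aux.Phi b = 0
        · exact absurd hadj (Stmt5Aux.unc_not_adj ha hb)
        · have hfM : s(b, Stmt5Aux.partner b) ∈ (Stmt5Aux.matchingF m : Set _) := by
            exact_mod_cast Finset.mem_image_of_mem _ (by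
              simp only [Stmt5Aux.coveredSet, Finset.mem_filter, Finset.mem_univ, true_and]
              exact hb)
          by_cases hef : s(a,b) = s(b, Stmt5Aux.partner b)
          · rw [hef]; exact hfM
          · exact ((hM'.2 s(a,b) he _ (hsub hfM) hef b (Sym2.mem_mk_right a b))
              (Sym2.mem_mk_left b _)).elim
      · have hfM : s(a, Stmt5Aux.partner a) ∈ (Stmt5Aux.matchingF m : Set _) := by
          exact_mod_cast Finset.mem_image_of_mem _ (by
            simp only [Stmt5Aux.coveredSet, Finset.mem_filter, Finset.mem_univ, true_and]
            exact ha)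
        by_cases hef : s(a,b) = s(a, Stmt5Aux.partner a)
        · rw [hef]; exact hfM
        · exact ((hM'.2 s(a,b) he _ (hsub hfM) hef a (Sym2.mem_mk_left a b))
            (Sym2.mem_mk_left a _)).elim
  · -- cardinality
    rw [Set.ncard_coe_finset]
    exact Stmt5Aux.matchingF_card
end

section
/- Let G be a graph whose vertex set is partitioned as V_0 ⊔ V_1 ⊔ ... ⊔ V_ℓ such that every edge joins some V_i to V_{i+1}, and suppose that for all 0 ≤ i < ⌊ℓ/2⌋ every subset X ⊆ V_i has at least |X| neighbors in V_{i+1}, and for all ⌈ℓ/2⌉ < i ≤ ℓ every subset X ⊆ V_i has at least |X| neighbors in V_{i−1}. Then G admits a maximal matching of cardinality at most |V|/3 + 6·max{|V_{⌊ℓ/2⌋}|, |V_{⌈ℓ/2⌉}|}. -/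
section Aux
variable {V : Type*} [Fintype V]

lemma extend_to_maximal (G : SimpleGraph V) (M₀ : Set (Sym2 V))
    (h : IsMatching G M₀) : ∃ M, IsMaximalMatching G M ∧ M₀ ⊆ M := by
  classical
  have hfin : {M' | IsMatching G M' ∧ M₀ ⊆ M'}.Finite := Set.toFinite _
  obtain ⟨M, hM, hmax⟩ := hfin.exists_maximalFor id _ ⟨M₀, h, subset_rfl⟩
  refine ⟨M, ⟨hM.1, fun M' hM' hsub => ?_⟩, hM.2⟩
  exact Set.Subset.antisymm (hmax ⟨hM', hM.2.trans hsub⟩ hsub) hsub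

lemma hall_aux (G : SimpleGraph V) (A B : Set V)
    (h : ∀ X ⊆ A, X.ncard ≤ (nbhdIn G X B).ncard) :
    ∃ f : V → V, Set.InjOn f A ∧ ∀ v ∈ A, f v ∈ B ∧ G.Adj v (f v) := by
  classical
  set t : A → Finset V := fun a => Finset.univ.filter (fun y => y ∈ B ∧ G.Adj ↑a y) with ht
  have hcond : ∀ s : Finset A, s.card ≤ (s.biUnion t).card := by
    intro s
    have hX : (Subtype.val '' (↑s : Set A)) ⊆ A := by
      rintro x ⟨⟨y, hy⟩, _, rfl⟩; exact hy
    have h1 := h _ hX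
    have hc1 : (Subtype.val '' (↑s : Set A)).ncard = s.card := by
      rw [Set.ncard_image_of_injective _ Subtype.val_injective, Set.ncard_coe_finset]
    have hc2 : nbhdIn G (Subtype.val '' (↑s : Set A)) B = ↑(s.biUnion t) := by
      ext y
      simp only [nbhdIn, Set.mem_setOf_eq, Finset.coe_biUnion, Set.mem_iUnion,
        Finset.mem_coe, Finset.mem_biUnion, ht, Finset.mem_filter, Finset.mem_univ,
        true_and, Set.mem_image, Set.mem_setOf_eq]
      constructor
      · rintro ⟨hyB, x, ⟨⟨x', hx'⟩, hx's, rfl⟩, hadj⟩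
        exact ⟨⟨x', hx'⟩, hx's, hyB, hadj⟩
      · rintro ⟨⟨x', hx'⟩, hs, hyB, hadj⟩
        exact ⟨hyB, x', ⟨⟨x', hx'⟩, hs, rfl⟩, hadj⟩
    rw [hc1, hc2, Set.ncard_coe_finset] at h1
    exact h1
  obtain ⟨f, hfinj, hf⟩ := (Finset.all_card_le_biUnion_card_iff_exists_injective t).mp hcond
  refine ⟨fun v => if hv : v ∈ A then f ⟨v, hv⟩ else v, ?_, ?_⟩
  · intro x hx y hy hxy
    simp only [dif_pos hx, dif_pos hy] at hxy
    exact Subtype.mk_eq_mk.mp (hfinj hxy)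
  · intro v hv
    simp only [dif_pos hv]
    have := hf ⟨v, hv⟩
    simp only [ht, Finset.mem_filter, Finset.mem_univ, true_and] at this
    exact this

lemma tele_mono (h : ℕ → ℕ) (n : ℕ) (H : ∀ k, k < n → h k ≤ h (k + 1)) :
    (∑ k ∈ Finset.range n, (h (k + 1) - h k)) = h n - h 0 ∧ h 0 ≤ h n := by
  induction n with
  | zero => simp
  | succ n ih =>
    obtain ⟨ih1, ih2⟩ := ih (fun k hk => H k (by omega))
    have h3 := H n (by omega)
    rw [Finset.sum_range_succ, ih1]
    omega

lemma tele_anti (h : ℕ → ℕ) (s : ℕ) (H : ∀ k, s ≤ k → h (k + 1) ≤ h k) (n : ℕ) :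
    (∑ j ∈ Finset.Icc s (s + n), (h j - h (j + 1))) = h s - h (s + n + 1) ∧
      h (s + n + 1) ≤ h s := by
  induction n with
  | zero =>
    have := H s le_rfl
    simp only [Nat.add_zero, Finset.Icc_self, Finset.sum_singleton]
    exact ⟨trivial, this⟩
  | succ n ih =>
    obtain ⟨ih1, ih2⟩ := ih
    have h1 := H (s + n) (by omega)
    have h2 := H (s + n + 1) (by omega)
    rw [show s + (n+1) = (s + n) + 1 by omega, Finset.sum_Icc_succ_top (by omega), ih1]
    constructor <;> omega

end Aux

/-- if the vertices of `G` are graded into levels `V_0, …, V_ℓ` (recorded by a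
rank function `r`) so that every edge joins consecutive levels, each `X ⊆ V_i` with
`i < ⌊ℓ/2⌋` has at least `|X|` neighbors in `V_{i+1}`, and each `X ⊆ V_i` with
`⌈ℓ/2⌉ < i ≤ ℓ` has at least `|X|` neighbors in `V_{i−1}`, then `G` admits a maximal
matching of cardinality at most `|V|/3 + 6·max{|V_{⌊ℓ/2⌋}|, |V_{⌈ℓ/2⌉}|}`. -/
theorem stmt7 {V : Type*} [Fintype V] (G : SimpleGraph V) (ℓ : ℕ) (r : V → ℕ)
    (hr : ∀ v, r v ≤ ℓ)
    (hadj : ∀ u v, G.Adj u v → r u + 1 = r v ∨ r v + 1 = r u)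
    (hii : ∀ i, i < ℓ / 2 → ∀ X ⊆ {v | r v = i},
      X.ncard ≤ (nbhdIn G X {v | r v = i + 1}).ncard)
    (hiii : ∀ i, (ℓ + 1) / 2 < i → i ≤ ℓ → ∀ X ⊆ {v | r v = i},
      X.ncard ≤ (nbhdIn G X {v | r v = i - 1}).ncard) :
    ∃ M : Set (Sym2 V), IsMaximalMatching G M ∧
      (M.ncard : ℝ) ≤ (Fintype.card V : ℝ) / 3 +
        6 * max ({v | r v = ℓ / 2}.ncard : ℝ) ({v | r v = (ℓ + 1) / 2}.ncard : ℝ) := by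
  classical
  set m := ℓ / 2 with hm
  set m' := (ℓ + 1) / 2 with hm'
  set Lf : ℕ → Finset V := fun i => Finset.univ.filter (fun v => r v = i) with hLfdef
  have hLf : ∀ i v, v ∈ Lf i ↔ r v = i := by intro i v; simp [hLfdef]
  have hLcoe : ∀ i, {v | r v = i} = ↑(Lf i) := by intro i; ext v; simp [hLfdef]
  set c : ℕ → ℕ := fun i => (Lf i).card with hcdef
  have hncard : ∀ i, {v | r v = i}.ncard = c i := fun i => by
    rw [hLcoe i, Set.ncard_coe_finset]
  have hempty : ∀ i, ℓ < i → Lf i = ∅ := by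
    intro i hi
    apply Finset.eq_empty_of_forall_notMem
    intro v hv; rw [hLf] at hv; have := hr v; omega
  have hsumV : (∑ i ∈ Finset.range (ℓ + 1), c i) = Fintype.card V := by
    rw [← Finset.card_univ,
      Finset.card_eq_sum_card_fiberwise (f := r) (t := Finset.range (ℓ + 1))
        (fun v _ => Finset.mem_range.mpr (by have := hr v; omega))]
  have hsubN : ∀ (X : Set V) i, nbhdIn G X {v | r v = i} ⊆ {v | r v = i} :=
    fun X i y hy => hy.1
  have hmono : ∀ k, k < m → c k ≤ c (k + 1) := by
    intro k hk
    calc c k = {v | r v = k}.ncard := (hncard k).symm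
      _ ≤ (nbhdIn G {v | r v = k} {v | r v = k + 1}).ncard := hii k hk _ subset_rfl
      _ ≤ {v | r v = k + 1}.ncard := Set.ncard_le_ncard (hsubN _ _) (Set.toFinite _)
      _ = c (k + 1) := hncard _
  have hanti : ∀ k, m' ≤ k → c (k + 1) ≤ c k := by
    intro k hk
    by_cases hkl : k + 1 ≤ ℓ
    · have h1 := hiii (k + 1) (by omega) hkl {v | r v = k + 1} subset_rfl
      simp only [Nat.add_sub_cancel] at h1
      calc c (k + 1) = {v | r v = k + 1}.ncard := (hncard _).symm
        _ ≤ _ := h1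
        _ ≤ {v | r v = k}.ncard := Set.ncard_le_ncard (hsubN _ _) (Set.toFinite _)
        _ = c k := hncard _
    · have h0 : c (k + 1) = 0 := by
        rw [hcdef]; simp [hempty (k + 1) (by omega)]
      omega
  -- Hall injections
  have hFex : ∀ i : ℕ, ∃ f : V → V, i < m →
      (Set.InjOn f {v | r v = i} ∧ ∀ v ∈ {v | r v = i},
        f v ∈ {v | r v = i + 1} ∧ G.Adj v (f v)) := by
    intro i
    by_cases hi : i < m
    · obtain ⟨f, h1, h2⟩ := hall_aux G {v | r v = i} {v | r v = i + 1} (hii i hi)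
      exact ⟨f, fun _ => ⟨h1, h2⟩⟩
    · exact ⟨id, fun h => absurd h hi⟩
  choose F hF using hFex
  have hGex : ∀ i : ℕ, ∃ g : V → V, m' + 2 ≤ i → i ≤ ℓ →
      (Set.InjOn g {v | r v = i} ∧ ∀ v ∈ {v | r v = i},
        g v ∈ {v | r v = i - 1} ∧ G.Adj v (g v)) := by
    intro i
    by_cases hi : m' + 2 ≤ i ∧ i ≤ ℓ
    · obtain ⟨g, h1, h2⟩ := hall_aux G {v | r v = i} {v | r v = i - 1}
        (hiii i (by omega) hi.2)
      exact ⟨g, fun _ _ => ⟨h1, h2⟩⟩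
    · exact ⟨id, fun h1 h2 => absurd ⟨h1, h2⟩ hi⟩
  choose Gf hG using hGex
  have hFlevel : ∀ i w, i < m → r w = i → r (F i w) = i + 1 ∧ G.Adj w (F i w) := by
    intro i w hi hw
    exact (hF i hi).2 w hw
  have hGlevel : ∀ i w, m' + 2 ≤ i → i ≤ ℓ → r w = i →
      r (Gf i w) = i - 1 ∧ G.Adj w (Gf i w) := by
    intro i w hi1 hi2 hw
    exact (hG i hi1 hi2).2 w hw
  -- choice of residues
  set Sb : ℕ → ℕ := fun t => ∑ i ∈ (Finset.range m).filter (fun i => i % 3 = t), c i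
    with hSbdef
  set St : ℕ → ℕ := fun t => ∑ i ∈ (Finset.Icc (m' + 2) ℓ).filter (fun i => i % 3 = t), c i
    with hStdef
  obtain ⟨a, ha3, haSb⟩ : ∃ a, a < 3 ∧ 3 * Sb a ≤ Sb 0 + Sb 1 + Sb 2 := by
    rcases le_total (Sb 0) (Sb 1) with h01 | h01 <;>
      rcases le_total (Sb 0) (Sb 2) with h02 | h02 <;>
        rcases le_total (Sb 1) (Sb 2) with h12 | h12
    exacts [⟨0, by omega, by omega⟩, ⟨0, by omega, by omega⟩, ⟨0, by omega, by omega⟩,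
      ⟨2, by omega, by omega⟩, ⟨1, by omega, by omega⟩, ⟨1, by omega, by omega⟩,
      ⟨1, by omega, by omega⟩, ⟨2, by omega, by omega⟩]
  obtain ⟨b, hb3, hbSt⟩ : ∃ b, b < 3 ∧ 3 * St b ≤ St 0 + St 1 + St 2 := by
    rcases le_total (St 0) (St 1) with h01 | h01 <;>
      rcases le_total (St 0) (St 2) with h02 | h02 <;>
        rcases le_total (St 1) (St 2) with h12 | h12
    exacts [⟨0, by omega, by omega⟩, ⟨0, by omega, by omega⟩, ⟨0, by omega, by omega⟩,
      ⟨2, by omega, by omega⟩, ⟨1, by omega, by omega⟩, ⟨1, by omega, by omega⟩,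
      ⟨1, by omega, by omega⟩, ⟨2, by omega, by omega⟩]
  have hpartb : Sb 0 + Sb 1 + Sb 2 = ∑ i ∈ Finset.range m, c i := by
    have h3 : (∑ t ∈ Finset.range 3, Sb t) = ∑ i ∈ Finset.range m, c i := by
      rw [hSbdef]
      exact Finset.sum_fiberwise_of_maps_to
        (fun i _ => Finset.mem_range.mpr (Nat.mod_lt _ (by omega))) c
    rw [← h3]
    simp [Finset.sum_range_succ]
  have hpartt : St 0 + St 1 + St 2 = ∑ i ∈ Finset.Icc (m' + 2) ℓ, c i := by
    have h3 : (∑ t ∈ Finset.range 3, St t) = ∑ i ∈ Finset.Icc (m' + 2) ℓ, c i := by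
      rw [hStdef]
      exact Finset.sum_fiberwise_of_maps_to
        (fun i _ => Finset.mem_range.mpr (Nat.mod_lt _ (by omega))) c
    rw [← h3]
    simp [Finset.sum_range_succ]
  have hsum2 : (∑ i ∈ Finset.range m, c i) + (∑ i ∈ Finset.Icc (m' + 2) ℓ, c i) ≤
      Fintype.card V := by
    rw [← hsumV, ← Finset.sum_union (by
      rw [Finset.disjoint_left]; intro x hx hx'
      rw [Finset.mem_range] at hx
      rw [Finset.mem_Icc] at hx'
      omega)]
    apply Finset.sum_le_sum_of_subset
    intro i hi
    rw [Finset.mem_union, Finset.mem_range, Finset.mem_Icc] at hi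
    rw [Finset.mem_range]
    omega
  -- the two partial matchings
  set Jb : Finset ℕ := (Finset.range m).filter (fun i => i % 3 = a) with hJbdef
  set Jt : Finset ℕ := (Finset.Icc (m' + 2) ℓ).filter (fun i => i % 3 = b) with hJtdef
  set MbF : Finset (Sym2 V) := Jb.biUnion (fun i => (Lf i).image (fun w => s(w, F i w)))
    with hMbdef
  set MtF : Finset (Sym2 V) := Jt.biUnion (fun i => (Lf i).image (fun w => s(w, Gf i w)))
    with hMtdef
  set M0 : Set (Sym2 V) := ↑(MbF ∪ MtF) with hM0def
  have hMbmem : ∀ e, e ∈ MbF ↔ ∃ i, (i < m ∧ i % 3 = a) ∧ ∃ w, r w = i ∧ e = s(w, F i w) := by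
    intro e
    simp only [hMbdef, Finset.mem_biUnion, Finset.mem_image, hJbdef, Finset.mem_filter,
      Finset.mem_range, hLf]
    constructor
    · rintro ⟨i, ⟨h1, h2⟩, w, hw, rfl⟩
      exact ⟨i, ⟨h1, h2⟩, w, hw, rfl⟩
    · rintro ⟨i, ⟨h1, h2⟩, w, hw, rfl⟩
      exact ⟨i, ⟨h1, h2⟩, w, hw, rfl⟩
  have hMtmem : ∀ e, e ∈ MtF ↔
      ∃ i, (m' + 2 ≤ i ∧ i ≤ ℓ ∧ i % 3 = b) ∧ ∃ w, r w = i ∧ e = s(w, Gf i w) := by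
    intro e
    simp only [hMtdef, Finset.mem_biUnion, Finset.mem_image, hJtdef, Finset.mem_filter,
      Finset.mem_Icc, hLf]
    constructor
    · rintro ⟨i, ⟨⟨h1, h2⟩, h3⟩, w, hw, rfl⟩
      exact ⟨i, ⟨h1, h2, h3⟩, w, hw, rfl⟩
    · rintro ⟨i, ⟨h1, h2, h3⟩, w, hw, rfl⟩
      exact ⟨i, ⟨⟨h1, h2⟩, h3⟩, w, hw, rfl⟩
  have hM0desc : ∀ e ∈ M0,
      (∃ i, (i < m ∧ i % 3 = a) ∧ ∃ w, r w = i ∧ e = s(w, F i w)) ∨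
      (∃ i, (m' + 2 ≤ i ∧ i ≤ ℓ ∧ i % 3 = b) ∧ ∃ w, r w = i ∧ e = s(w, Gf i w)) := by
    intro e he
    rw [hM0def, Finset.coe_union, Set.mem_union, Finset.mem_coe, Finset.mem_coe,
      hMbmem, hMtmem] at he
    exact he
  have hM0match : IsMatching G M0 := by
    constructor
    · intro e he
      rcases hM0desc e he with ⟨i, hi, w, hw, rfl⟩ | ⟨i, hi, w, hw, rfl⟩
      · exact (hFlevel i w hi.1 hw).2
      · exact (hGlevel i w hi.1 hi.2.1 hw).2
    · intro e he f hf hef v hve hvf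
      rcases hM0desc e he with ⟨i, hi, w, hw, rfl⟩ | ⟨i, hi, w, hw, rfl⟩ <;>
        rcases hM0desc f hf with ⟨i', hi', w', hw', rfl⟩ | ⟨i', hi', w', hw', rfl⟩
      · -- bottom / bottom
        have hF1 := (hFlevel i w hi.1 hw).1
        have hF1' := (hFlevel i' w' hi'.1 hw').1
        rcases Sym2.mem_iff.mp hve with rfl | rfl <;>
          rcases Sym2.mem_iff.mp hvf with h2 | h2
        · apply hef
          have hii' : i = i' := by rw [h2] at hw; omega
          subst hii'; rw [h2]
        · rw [h2] at hw; omega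
        · rw [← h2] at hw'; omega
        · have hii' : i = i' := by rw [h2] at hF1; omega
          subst hii'
          have hww' : w = w' := (hF i hi.1).1 hw hw' h2
          exact hef (by rw [hww'])
      · -- bottom / top
        have hF1 := (hFlevel i w hi.1 hw).1
        have hG1' := (hGlevel i' w' hi'.1 hi'.2.1 hw').1
        rcases Sym2.mem_iff.mp hve with rfl | rfl <;>
          rcases Sym2.mem_iff.mp hvf with h2 | h2 <;>
          [skip; skip; skip; skip] <;>
          first
          | (rw [h2] at hw; omega)
          | (rw [h2] at hF1; omega)
      · -- top / bottom
        have hG1 := (hGlevel i w hi.1 hi.2.1 hw).1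
        have hF1' := (hFlevel i' w' hi'.1 hw').1
        rcases Sym2.mem_iff.mp hve with rfl | rfl <;>
          rcases Sym2.mem_iff.mp hvf with h2 | h2 <;>
          first
          | (rw [h2] at hw; omega)
          | (rw [h2] at hG1; omega)
      · -- top / top
        have hG1 := (hGlevel i w hi.1 hi.2.1 hw).1
        have hG1' := (hGlevel i' w' hi'.1 hi'.2.1 hw').1
        rcases Sym2.mem_iff.mp hve with rfl | rfl <;>
          rcases Sym2.mem_iff.mp hvf with h2 | h2
        · apply hef
          have hii' : i = i' := by rw [h2] at hw; omega
          subst hii'; rw [h2]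
        · rw [h2] at hw; omega
        · rw [← h2] at hw'; omega
        · have hii' : i = i' := by rw [h2] at hG1; omega
          subst hii'
          have hww' : w = w' := (hG i hi.1 hi.2.1).1 hw hw' h2
          exact hef (by rw [hww'])
  have covb : ∀ i w, i < m → i % 3 = a → r w = i →
      Covered M0 w ∧ Covered M0 (F i w) := by
    intro i w h1 h2 hw
    have he : s(w, F i w) ∈ M0 := by
      rw [hM0def, Finset.coe_union, Set.mem_union]
      exact Or.inl (Finset.mem_coe.mpr ((hMbmem _).mpr ⟨i, ⟨h1, h2⟩, w, hw, rfl⟩))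
    exact ⟨⟨_, he, Sym2.mem_mk_left _ _⟩, ⟨_, he, Sym2.mem_mk_right _ _⟩⟩
  have covt : ∀ i w, m' + 2 ≤ i → i ≤ ℓ → i % 3 = b → r w = i →
      Covered M0 w ∧ Covered M0 (Gf i w) := by
    intro i w h1 h2 h3 hw
    have he : s(w, Gf i w) ∈ M0 := by
      rw [hM0def, Finset.coe_union, Set.mem_union]
      exact Or.inr (Finset.mem_coe.mpr ((hMtmem _).mpr ⟨i, ⟨h1, h2, h3⟩, w, hw, rfl⟩))
    exact ⟨⟨_, he, Sym2.mem_mk_left _ _⟩, ⟨_, he, Sym2.mem_mk_right _ _⟩⟩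
  -- the bad set
  set Db : ℕ → Finset V := fun j =>
      if j = 0 then Lf 0 else (Lf j) \ ((Lf (j - 1)).image (F (j - 1))) with hDbdef
  set Jb' : Finset ℕ := (Finset.range (m + 1)).filter (fun j => j % 3 = (a + 1) % 3)
    with hJb'def
  set Dt : ℕ → Finset V := fun j => (Lf j) \ ((Lf (j + 1)).image (Gf (j + 1))) with hDtdef
  set Jt' : Finset ℕ := (Finset.Icc (m' + 1) ℓ).filter (fun j => (j + 1) % 3 = b % 3)
    with hJt'def
  set BF : Finset V := ((((Jb'.biUnion Db) ∪ (Jt'.biUnion Dt)) ∪ Lf m) ∪ Lf m') ∪ Lf (m' + 1)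
    with hBFdef
  have hLb : (Jb'.biUnion Db).card ≤ c m := by
    refine le_trans Finset.card_biUnion_le ?_
    have hstep : ∀ j ∈ Jb', (Db j).card ≤ (if j = 0 then c 0 else c j - c (j - 1)) := by
      intro j hj
      rw [hJb'def, Finset.mem_filter, Finset.mem_range] at hj
      by_cases hj0 : j = 0
      · subst hj0; simp [hDbdef, hcdef]
      · rw [hDbdef]
        simp only [if_neg hj0]
        have hjm : j - 1 < m := by omega
        have hsub : (Lf (j - 1)).image (F (j - 1)) ⊆ Lf j := by
          intro x hx
          rw [Finset.mem_image] at hx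
          obtain ⟨w, hw, rfl⟩ := hx
          rw [hLf] at hw ⊢
          have := (hFlevel (j - 1) w hjm hw).1
          omega
        have hinj : Set.InjOn (F (j - 1)) ↑(Lf (j - 1)) := by
          have := (hF (j - 1) hjm).1
          rwa [hLcoe (j - 1)] at this
        rw [Finset.card_sdiff_of_subset hsub, Finset.card_image_of_injOn hinj]
    refine le_trans (Finset.sum_le_sum hstep) ?_
    have hsub2 : (∑ j ∈ Jb', (if j = 0 then c 0 else c j - c (j - 1))) ≤
        ∑ j ∈ Finset.range (m + 1), (if j = 0 then c 0 else c j - c (j - 1)) := by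
      apply Finset.sum_le_sum_of_subset
      rw [hJb'def]; exact Finset.filter_subset _ _
    refine le_trans hsub2 ?_
    rw [Finset.sum_range_succ']
    have hinner : (∑ k ∈ Finset.range m,
        (if k + 1 = 0 then c 0 else c (k + 1) - c (k + 1 - 1))) = c m - c 0 := by
      have heq : ∀ k ∈ Finset.range m,
          (if k + 1 = 0 then c 0 else c (k + 1) - c (k + 1 - 1)) = c (k + 1) - c k :=
        fun k _ => by simp
      rw [Finset.sum_congr rfl heq]
      exact (tele_mono c m hmono).1
    rw [hinner]
    have h2 := (tele_mono c m hmono).2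
    simp only [if_pos]
    omega
  have hLt : (Jt'.biUnion Dt).card ≤ c m' := by
    refine le_trans Finset.card_biUnion_le ?_
    have hstep : ∀ j ∈ Jt', (Dt j).card ≤ c j - c (j + 1) := by
      intro j hj
      rw [hJt'def, Finset.mem_filter, Finset.mem_Icc] at hj
      by_cases hjl : j + 1 ≤ ℓ
      · have hsub : (Lf (j + 1)).image (Gf (j + 1)) ⊆ Lf j := by
          intro x hx
          rw [Finset.mem_image] at hx
          obtain ⟨w, hw, rfl⟩ := hx
          rw [hLf] at hw ⊢
          have := (hGlevel (j + 1) w (by omega) hjl hw).1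
          omega
        have hinj : Set.InjOn (Gf (j + 1)) ↑(Lf (j + 1)) := by
          have := (hG (j + 1) (by omega) hjl).1
          rwa [hLcoe (j + 1)] at this
        rw [hDtdef, Finset.card_sdiff_of_subset hsub, Finset.card_image_of_injOn hinj]
      · have h1 : c (j + 1) = 0 := by
          rw [hcdef]; simp [hempty (j + 1) (by omega)]
        have h2 : (Dt j).card ≤ c j := by
          rw [hDtdef]
          exact Finset.card_le_card Finset.sdiff_subset
        omega
    refine le_trans (Finset.sum_le_sum hstep) ?_
    have hsubJ : Jt' ⊆ Finset.Icc (m' + 1) (m' + 1 + (ℓ - (m' + 1))) := by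
      intro j hj
      rw [hJt'def, Finset.mem_filter, Finset.mem_Icc] at hj
      rw [Finset.mem_Icc]
      omega
    refine le_trans (Finset.sum_le_sum_of_subset hsubJ) ?_
    have h1 := (tele_anti c (m' + 1) (fun k hk => hanti k (by omega)) (ℓ - (m' + 1))).1
    have h2 := (tele_anti c (m' + 1) (fun k hk => hanti k (by omega)) (ℓ - (m' + 1))).2
    have hcm'1 : c (m' + 1) ≤ c m' := hanti m' le_rfl
    omega
  have hcm'1 : c (m' + 1) ≤ c m' := hanti m' le_rfl
  have hBF : BF.card ≤ 2 * c m + 3 * c m' := by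
    have h1 := Finset.card_union_le (((Jb'.biUnion Db ∪ Jt'.biUnion Dt) ∪ Lf m) ∪ Lf m')
      (Lf (m' + 1))
    have h2 := Finset.card_union_le ((Jb'.biUnion Db ∪ Jt'.biUnion Dt) ∪ Lf m) (Lf m')
    have h3 := Finset.card_union_le (Jb'.biUnion Db ∪ Jt'.biUnion Dt) (Lf m)
    have h4 := Finset.card_union_le (Jb'.biUnion Db) (Jt'.biUnion Dt)
    have e1 : (Lf m).card = c m := rfl
    have e2 : (Lf m').card = c m' := rfl
    have e3 : (Lf (m' + 1)).card = c (m' + 1) := rfl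
    rw [hBFdef]
    omega
  -- every edge of G between two M0-uncovered vertices touches BF
  have hclaim : ∀ u v, G.Adj u v → r u + 1 = r v → ¬ Covered M0 u → ¬ Covered M0 v →
      u ∈ BF ∨ v ∈ BF := by
    intro u v huv hr1 hu hv
    have hul : r v ≤ ℓ := hr v
    have hBFmem : ∀ x : V, (x ∈ Jb'.biUnion Db ∨ x ∈ Jt'.biUnion Dt ∨
        r x = m ∨ r x = m' ∨ r x = m' + 1) → x ∈ BF := by
      intro x hx
      rw [hBFdef]
      rcases hx with hx | hx | hx | hx | hx
      · exact Finset.mem_union_left _ (Finset.mem_union_left _ (Finset.mem_union_left _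
          (Finset.mem_union_left _ hx)))
      · exact Finset.mem_union_left _ (Finset.mem_union_left _ (Finset.mem_union_left _
          (Finset.mem_union_right _ hx)))
      · exact Finset.mem_union_left _ (Finset.mem_union_left _
          (Finset.mem_union_right _ ((hLf _ _).mpr hx)))
      · exact Finset.mem_union_left _ (Finset.mem_union_right _ ((hLf _ _).mpr hx))
      · exact Finset.mem_union_right _ ((hLf _ _).mpr hx)
    by_cases h1 : r u = m ∨ r u = m' ∨ r u = m' + 1
    · exact Or.inl (hBFmem u (Or.inr (Or.inr h1)))
    by_cases h2 : r v = m ∨ r v = m' ∨ r v = m' + 1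
    · exact Or.inr (hBFmem v (Or.inr (Or.inr h2)))
    push_neg at h1 h2
    obtain ⟨h1a, h1b, h1c⟩ := h1
    obtain ⟨h2a, h2b, h2c⟩ := h2
    have hsplit : r u + 1 < m ∨ m' + 2 ≤ r u := by omega
    rcases hsplit with hbot | htop
    · -- bottom half
      have hres : r u % 3 = a ∨ (r u + 1) % 3 = a ∨ r u % 3 = (a + 1) % 3 := by omega
      rcases hres with hres | hres | hres
      · exact absurd (covb (r u) u (by omega) hres rfl).1 hu
      · exact absurd (covb (r v) v (by omega) (by omega) rfl).1 hv
      · refine Or.inl (hBFmem u (Or.inl ?_))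
        rw [Finset.mem_biUnion]
        refine ⟨r u, ?_, ?_⟩
        · rw [hJb'def, Finset.mem_filter, Finset.mem_range]
          exact ⟨by omega, hres⟩
        · rw [hDbdef]
          by_cases hu0 : r u = 0
          · simp only [if_pos hu0]
            exact (hLf 0 u).mpr hu0
          · simp only [if_neg hu0]
            rw [Finset.mem_sdiff]
            refine ⟨(hLf _ _).mpr rfl, ?_⟩
            intro hmem
            rw [Finset.mem_image] at hmem
            obtain ⟨w, hw, hwu⟩ := hmem
            rw [hLf] at hw
            have hcov := covb (r u - 1) w (by omega) (by omega) hw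
            rw [hwu] at hcov
            exact absurd hcov.2 hu
    · -- top half
      have hres : r u % 3 = b ∨ (r u + 1) % 3 = b ∨ (r u + 2) % 3 = b := by omega
      rcases hres with hres | hres | hres
      · exact absurd (covt (r u) u htop (by omega) hres rfl).1 hu
      · exact absurd (covt (r v) v (by omega) (by omega) (by omega) rfl).1 hv
      · refine Or.inr (hBFmem v (Or.inr (Or.inl ?_)))
        rw [Finset.mem_biUnion]
        refine ⟨r v, ?_, ?_⟩
        · rw [hJt'def, Finset.mem_filter, Finset.mem_Icc]
          exact ⟨⟨by omega, by omega⟩, by omega⟩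
        · rw [hDtdef, Finset.mem_sdiff]
          refine ⟨(hLf _ _).mpr rfl, ?_⟩
          intro hmem
          rw [Finset.mem_image] at hmem
          obtain ⟨w, hw, hwv⟩ := hmem
          rw [hLf] at hw
          have hle : r v + 1 ≤ ℓ := by have := hr w; omega
          have hcov := covt (r v + 1) w (by omega) hle (by omega) hw
          rw [hwv] at hcov
          exact absurd hcov.2 hv
  -- extend to a maximal matching
  obtain ⟨M, hMmax, hM0M⟩ := extend_to_maximal G M0 hM0match
  refine ⟨M, hMmax, ?_⟩
  have hnew : ∀ e ∈ M \ M0, ∃ x, x ∈ BF ∧ x ∈ e := by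
    intro e
    induction e using Sym2.ind with
    | _ u v =>
      intro he
      obtain ⟨heM, heM0⟩ := he
      have hedge : G.Adj u v := by
        have := hMmax.1.1 heM
        rwa [SimpleGraph.mem_edgeSet] at this
      have huncov : ¬ Covered M0 u := by
        rintro ⟨f, hfM0, huf⟩
        exact hMmax.1.2 _ heM f (hM0M hfM0) (by rintro rfl; exact heM0 hfM0) u
          (Sym2.mem_mk_left _ _) huf
      have hvncov : ¬ Covered M0 v := by
        rintro ⟨f, hfM0, hvf⟩
        exact hMmax.1.2 _ heM f (hM0M hfM0) (by rintro rfl; exact heM0 hfM0) v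
          (Sym2.mem_mk_right _ _) hvf
      rcases hadj u v hedge with h | h
      · rcases hclaim u v hedge h huncov hvncov with hx | hx
        · exact ⟨u, hx, Sym2.mem_mk_left _ _⟩
        · exact ⟨v, hx, Sym2.mem_mk_right _ _⟩
      · rcases hclaim v u hedge.symm h hvncov huncov with hx | hx
        · exact ⟨v, hx, Sym2.mem_mk_right _ _⟩
        · exact ⟨u, hx, Sym2.mem_mk_left _ _⟩
  -- counting
  have hMcount : M.ncard ≤ (MbF.card + MtF.card) + BF.card := by
    have h1 : M.ncard ≤ M0.ncard + (M \ M0).ncard := by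
      calc M.ncard = (M0 ∪ (M \ M0)).ncard := by rw [Set.union_diff_cancel hM0M]
        _ ≤ M0.ncard + (M \ M0).ncard := Set.ncard_union_le _ _
    have h2 : M0.ncard ≤ MbF.card + MtF.card := by
      rw [hM0def, Set.ncard_coe_finset]
      exact Finset.card_union_le _ _
    have h3 : (M \ M0).ncard ≤ BF.card := by
      by_cases hne : (M \ M0) = ∅
      · rw [hne]; simp
      · obtain ⟨e0, he0⟩ := Set.nonempty_iff_ne_empty.mpr hne
        obtain ⟨x0, -, -⟩ := hnew e0 he0
        haveI : Nonempty V := ⟨x0⟩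
        set φ : Sym2 V → V := fun e =>
          if h : ∃ x, x ∈ BF ∧ x ∈ e then h.choose else Classical.arbitrary V with hφ
        have hφmem : ∀ e ∈ M \ M0, φ e ∈ BF ∧ φ e ∈ e := by
          intro e he
          have h := hnew e he
          rw [hφ]
          simp only [dif_pos h]
          exact h.choose_spec
        have hcount := Set.ncard_le_ncard_of_injOn (t := (↑BF : Set V)) φ
          (fun e he => (hφmem e he).1) ?_ (Set.toFinite _)
        · rwa [Set.ncard_coe_finset] at hcount
        · intro e he f hf hef
          by_contra hne'
          exact hMmax.1.2 e he.1 f hf.1 hne' (φ e) (hφmem e he).2 (hef ▸ (hφmem f hf).2)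
    omega
  have hb1 : 3 * (MbF.card + MtF.card) ≤ Fintype.card V := by
    have hMb : MbF.card ≤ Sb a := by
      rw [hMbdef, hSbdef]
      refine le_trans Finset.card_biUnion_le (Finset.sum_le_sum ?_)
      intro i hi
      rw [hJbdef] at hi
      exact Finset.card_image_le
    have hMt : MtF.card ≤ St b := by
      rw [hMtdef, hStdef]
      refine le_trans Finset.card_biUnion_le (Finset.sum_le_sum ?_)
      intro i hi
      rw [hJtdef] at hi
      exact Finset.card_image_le
    omega
  -- final arithmetic
  rw [hncard m, hncard m']
  have hc1 : (M.ncard : ℝ) ≤ ((MbF.card : ℝ) + (MtF.card : ℝ)) + (BF.card : ℝ) := by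
    exact_mod_cast hMcount
  have hc2 : 3 * ((MbF.card : ℝ) + (MtF.card : ℝ)) ≤ (Fintype.card V : ℝ) := by
    exact_mod_cast hb1
  have hc3 : (BF.card : ℝ) ≤ 2 * (c m : ℝ) + 3 * (c m' : ℝ) := by exact_mod_cast hBF
  have hmax1 : (c m : ℝ) ≤ max (c m : ℝ) (c m') := le_max_left _ _
  have hmax2 : (c m' : ℝ) ≤ max (c m : ℝ) (c m') := le_max_right _ _
  have h0 : (0 : ℝ) ≤ max (c m : ℝ) (c m') := le_trans (Nat.cast_nonneg _) hmax1
  linarith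
end

section
/- The n-dimensional hypercube Q_n admits a maximal matching of cardinality at most 2^n/3 + 6·C(n, ⌊n/2⌋). -/
namespace HQaux

variable {n : ℕ}


variable {n : ℕ}

abbrev V (n : ℕ) := Fin n → Bool

def wt (x : V n) : ℕ := (Finset.univ.filter fun i => x i = true).card

lemma hyp_adj {x y : V n} : (hypercube n).Adj x y ↔ ∃! i, x i ≠ y i := by
  constructor
  · rintro ⟨hne, h | h⟩
    · exact h
    · obtain ⟨i, hi, hu⟩ := h
      exact ⟨i, Ne.symm hi, fun j hj => hu j (Ne.symm hj)⟩
  · intro h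
    refine ⟨?_, Or.inl h⟩
    obtain ⟨i, hi, -⟩ := h
    intro hxy; exact hi (by rw [hxy])

def flip (x : V n) (i : Fin n) : V n := Function.update x i (!x i)

lemma flip_ne (x : V n) (i : Fin n) : flip x i i ≠ x i := by
  simp [flip]

lemma flip_eq (x : V n) {i j : Fin n} (h : j ≠ i) : flip x i j = x j := by
  simp [flip, Function.update_of_ne h]

lemma adj_flip (x : V n) (i : Fin n) : (hypercube n).Adj x (flip x i) := by
  rw [hyp_adj]
  refine ⟨i, (flip_ne x i).symm, fun j hj => ?_⟩
  by_contra hji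
  exact hj (flip_eq x hji).symm

lemma adj_exists_flip {x y : V n} (h : (hypercube n).Adj x y) : ∃ i, y = flip x i := by
  rw [hyp_adj] at h
  obtain ⟨i, hi, hu⟩ := h
  refine ⟨i, funext fun j => ?_⟩
  by_cases hji : j = i
  · subst hji
    cases hx : x j <;> cases hy : y j <;> simp_all [flip]
  · rw [flip_eq x hji]
    by_contra hne
    exact hji (hu j (Ne.symm hne))

lemma wt_flip_false {x : V n} {i : Fin n} (h : x i = false) : wt (flip x i) = wt x + 1 := by
  unfold wt
  have : (Finset.univ.filter fun j => flip x i j = true)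
      = insert i (Finset.univ.filter fun j => x j = true) := by
    ext j
    by_cases hji : j = i
    · subst hji; simp [flip, h]
    · simp [flip_eq x hji, hji]
  rw [this, Finset.card_insert_of_notMem (by simp [h])]

lemma wt_flip_true {x : V n} {i : Fin n} (h : x i = true) : wt x = wt (flip x i) + 1 := by
  have h2 : flip x i i = false := by simp [flip, h]
  have : flip (flip x i) i = x := by
    funext j
    by_cases hji : j = i
    · subst hji; simp [flip, h]
    · rw [flip_eq _ hji, flip_eq _ hji]
  have := wt_flip_false (x := flip x i) (i := i) h2
  rw [‹flip (flip x i) i = x›] at this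
  omega

lemma adj_wt {x y : V n} (h : (hypercube n).Adj x y) : wt y = wt x + 1 ∨ wt x = wt y + 1 := by
  obtain ⟨i, rfl⟩ := adj_exists_flip h
  cases hx : x i
  · exact Or.inl (wt_flip_false hx)
  · exact Or.inr (wt_flip_true hx)

lemma wt_le (x : V n) : wt x ≤ n := by
  simpa [wt] using (Finset.card_filter_le Finset.univ fun i => x i = true)

def level (n k : ℕ) : Finset (V n) := Finset.univ.filter fun x => wt x = k

lemma card_level (k : ℕ) : (level n k).card = n.choose k := by
  rw [← Fintype.card_coe]
  let e : {s : Finset (Fin n) // s.card = k} ≃ (level n k) :=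
    { toFun := fun s => ⟨fun i => decide (i ∈ s.1), by
        simp only [level, Finset.mem_filter, Finset.mem_univ, true_and]; simp only [wt]
        rw [show (Finset.univ.filter fun i => decide (i ∈ s.1) = true) = s.1 by ext i; simp]
        exact s.2⟩
      invFun := fun x => ⟨Finset.univ.filter fun i => x.1 i = true, by
        have := x.2; simp only [level, Finset.mem_filter, Finset.mem_univ, true_and] at this; simp only [wt] at this
        exact this⟩
      left_inv := fun s => by ext i; simp
      right_inv := fun x => by ext i; simp }
  rw [← Fintype.card_congr e, Fintype.card_finset_len, Fintype.card_fin]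


lemma flip_flip (x : V n) (i : Fin n) : flip (flip x i) i = x := by
  funext j
  by_cases hji : j = i
  · subst hji; simp [flip]
  · simp [flip, Function.update_of_ne hji]

lemma card_false_idx {x : V n} (hx : wt x = k) :
    (Finset.univ.filter fun i => x i = false).card = n - k := by
  have h1 := Finset.card_filter_add_card_filter_not
    (s := (Finset.univ : Finset (Fin n))) (p := fun i => x i = true)
  have h2 : (Finset.univ.filter fun i => ¬ x i = true) =
      (Finset.univ.filter fun i => x i = false) := by
    apply Finset.filter_congr; intro i _; simp
  rw [h2] at h1
  simp only [Finset.card_univ, Fintype.card_fin] at h1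
  have : wt x = (Finset.univ.filter fun i => x i = true).card := rfl
  omega

lemma exists_inj_up {k : ℕ} (hkn : k < n) (hk : n.choose k ≤ n.choose (k + 1)) :
    ∃ f : V n → V n, Set.InjOn f (level n k) ∧
      ∀ x ∈ level n k, (hypercube n).Adj x (f x) ∧ wt (f x) = k + 1 := by
  classical
  -- from the choose inequality, k+1 ≤ n-k
  have hrec := Nat.choose_succ_right_eq n k
  have hpos : 0 < n.choose k := Nat.choose_pos (le_of_lt hkn)
  have hkk : k + 1 ≤ n - k := by
    have h1 : n.choose k * (k+1) ≤ n.choose (k+1) * (k+1) := Nat.mul_le_mul_right _ hk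
    rw [hrec] at h1
    exact Nat.le_of_mul_le_mul_left h1 hpos
  -- Hall setup
  set t : (level n k) → Finset (V n) :=
    fun x => (Finset.univ.filter fun i => x.1 i = false).image (flip x.1) with ht
  have hwt : ∀ x : (level n k), wt x.1 = k := by
    intro x
    have := x.2
    simp only [level, Finset.mem_filter] at this
    exact this.2
  have htmem : ∀ (x : level n k) (y : V n), y ∈ t x →
      (hypercube n).Adj x.1 y ∧ wt y = k + 1 := by
    intro x y hy
    simp only [ht, Finset.mem_image, Finset.mem_filter, Finset.mem_univ, true_and] at hy
    obtain ⟨i, hi, rfl⟩ := hy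
    exact ⟨adj_flip x.1 i, by rw [wt_flip_false hi, hwt x]⟩
  have hall : ∀ s : Finset (level n k), s.card ≤ (s.biUnion t).card := by
    intro s
    set N := s.biUnion t with hN
    -- double counting via sigma sets
    set P : Finset (Σ _ : V n, Fin n) :=
      (s.image Subtype.val).sigma (fun x => Finset.univ.filter fun i => x i = false) with hP
    set Q : Finset (Σ _ : V n, Fin n) :=
      N.sigma (fun y => Finset.univ.filter fun i => y i = true) with hQ
    have cardP : P.card = s.card * (n - k) := by
      rw [hP, Finset.card_sigma]
      have hcnt : ∀ x ∈ s.image Subtype.val,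
          (Finset.univ.filter fun i => x i = false).card = n - k := by
        intro x hx
        simp only [Finset.mem_image] at hx
        obtain ⟨x', _, rfl⟩ := hx
        exact card_false_idx (hwt x')
      rw [Finset.sum_congr rfl hcnt, Finset.sum_const, smul_eq_mul,
        Finset.card_image_of_injective _ Subtype.val_injective]
    have hNlevel : ∀ y ∈ N, wt y = k + 1 := by
      intro y hy
      rw [hN, Finset.mem_biUnion] at hy
      obtain ⟨x, _, hyx⟩ := hy
      exact (htmem x y hyx).2
    have cardQ : Q.card = N.card * (k + 1) := by
      rw [hQ, Finset.card_sigma]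
      have hcnt : ∀ y ∈ N, (Finset.univ.filter fun i => y i = true).card = k + 1 :=
        fun y hy => hNlevel y hy
      rw [Finset.sum_congr rfl hcnt, Finset.sum_const, smul_eq_mul]
    have hinj : P.card ≤ Q.card := by
      apply Finset.card_le_card_of_injOn (fun p => ⟨flip p.1 p.2, p.2⟩)
      · rintro ⟨x, i⟩ hp
        simp only [Finset.mem_coe, hP, Finset.mem_sigma, Finset.mem_filter, Finset.mem_univ, true_and,
          Finset.mem_image] at hp
        obtain ⟨⟨x', hx's, hx'⟩, hxi⟩ := hp
        simp only [Finset.mem_coe, hQ, Finset.mem_sigma, Finset.mem_filter, Finset.mem_univ, true_and]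
        constructor
        · rw [hN, Finset.mem_biUnion]
          refine ⟨x', hx's, ?_⟩
          simp only [ht, Finset.mem_image, Finset.mem_filter, Finset.mem_univ, true_and]
          exact ⟨i, by rw [hx']; exact hxi, by rw [hx']⟩
        · simp [flip, hxi]
      · rintro ⟨x, i⟩ hp ⟨x', i'⟩ hp' heq
        simp only [Sigma.mk.inj_iff] at heq
        obtain ⟨h1, h2⟩ := heq
        have hii : i = i' := eq_of_heq h2
        subst hii
        have : x = x' := by
          have := congrArg (fun z => flip z i) h1
          simpa [flip_flip] using this
        simp [this]
    rw [cardP, cardQ] at hinj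
    have h2 : s.card * (k+1) ≤ N.card * (k+1) :=
      le_trans (Nat.mul_le_mul_left _ hkk) hinj
    exact Nat.le_of_mul_le_mul_right h2 (Nat.succ_pos k)
  obtain ⟨f₀, hf₀inj, hf₀mem⟩ :=
    (Finset.all_card_le_biUnion_card_iff_exists_injective t).mp hall
  refine ⟨fun x => if h : x ∈ level n k then f₀ ⟨x, h⟩ else x, ?_, ?_⟩
  · intro x hx y hy hxy
    simp only [Finset.mem_coe] at hx hy
    simp only [dif_pos hx, dif_pos hy] at hxy
    exact congrArg Subtype.val (hf₀inj hxy)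
  · intro x hx
    simpa only [dif_pos hx] using htmem ⟨x, hx⟩ _ (hf₀mem ⟨x, hx⟩)
def compl' (x : V n) : V n := fun i => !x i

lemma compl'_compl' (x : V n) : compl' (compl' x) = x := by
  funext i; simp [compl']

lemma wt_compl' (x : V n) : wt (compl' x) = n - wt x := by
  have : (Finset.univ.filter fun i => compl' x i = true)
      = (Finset.univ.filter fun i => x i = false) := by
    apply Finset.filter_congr; intro i _; simp [compl']
  rw [wt, this, card_false_idx rfl]

lemma adj_compl' {x y : V n} (h : (hypercube n).Adj x y) :
    (hypercube n).Adj (compl' x) (compl' y) := by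
  rw [hyp_adj] at h ⊢
  obtain ⟨i, hi, hu⟩ := h
  refine ⟨i, by simp [compl']; exact fun h' => hi (by simp [h']), fun j hj => hu j ?_⟩
  intro hxy
  exact hj (by simp [compl', hxy])

lemma mem_level {k : ℕ} {x : V n} : x ∈ level n k ↔ wt x = k := by
  simp [level]

lemma exists_inj_down {k : ℕ} (hkn : k < n) (hk : n.choose (k + 1) ≤ n.choose k) :
    ∃ g : V n → V n, Set.InjOn g (level n (k + 1)) ∧
      ∀ x ∈ level n (k + 1), (hypercube n).Adj x (g x) ∧ wt (g x) = k := by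
  set k' := n - k - 1 with hk'
  have hk'n : k' < n := by omega
  have e1 : n.choose k' = n.choose (k + 1) := by
    have : k' = n - (k + 1) := by omega
    rw [this, Nat.choose_symm (by omega)]
  have e2 : n.choose (k' + 1) = n.choose k := by
    have : k' + 1 = n - k := by omega
    rw [this, Nat.choose_symm (by omega)]
  obtain ⟨f, hfinj, hf⟩ := exists_inj_up hk'n (by rw [e1, e2]; exact hk)
  refine ⟨fun x => compl' (f (compl' x)), ?_, ?_⟩
  · intro x hx y hy hxy
    simp only [Finset.mem_coe, mem_level] at hx hy
    have hcx : compl' x ∈ level n k' := by rw [mem_level, wt_compl', hx]; omega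
    have hcy : compl' y ∈ level n k' := by rw [mem_level, wt_compl', hy]; omega
    have h1 : f (compl' x) = f (compl' y) := by
      have := congrArg compl' hxy
      simpa [compl'_compl'] using this
    have h2 := hfinj hcx hcy h1
    have := congrArg compl' h2
    simpa [compl'_compl'] using this
  · intro x hx
    rw [mem_level] at hx
    have hcx : compl' x ∈ level n k' := by rw [mem_level, wt_compl', hx]; omega
    obtain ⟨ha, hw⟩ := hf (compl' x) hcx
    constructor
    · have := adj_compl' ha
      rwa [compl'_compl'] at this
    · rw [wt_compl', hw]
      omega

lemma blockOfInj {p q : ℕ} (hpq : p ≠ q) (f : V n → V n)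
    (hinj : Set.InjOn f (level n p))
    (hf : ∀ x ∈ level n p, (hypercube n).Adj x (f x) ∧ wt (f x) = q) :
    ∃ E : Finset (Sym2 (V n)),
      (↑E : Set (Sym2 (V n))) ⊆ (hypercube n).edgeSet ∧
      (∀ e ∈ E, ∀ v ∈ e, wt v = p ∨ wt v = q) ∧
      (∀ e ∈ E, ∀ g ∈ E, e ≠ g → ∀ v, v ∈ e → v ∉ g) ∧
      E.card = n.choose p ∧
      (Finset.univ.filter fun v : V n => (wt v = p ∨ wt v = q) ∧ ∀ e ∈ E, v ∉ e).card
        ≤ n.choose q - n.choose p := by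
  classical
  refine ⟨(level n p).image (fun x => s(x, f x)), ?_, ?_, ?_, ?_, ?_⟩
  · intro e he
    simp only [Finset.coe_image, Set.mem_image, Finset.mem_coe] at he
    obtain ⟨x, hx, rfl⟩ := he
    exact (hf x hx).1
  · intro e he v hv
    simp only [Finset.mem_image] at he
    obtain ⟨x, hx, rfl⟩ := he
    rcases Sym2.mem_iff.mp hv with rfl | rfl
    · exact Or.inl (mem_level.mp hx)
    · exact Or.inr (hf x hx).2
  · intro e he g hg hne v hve hvg
    simp only [Finset.mem_image] at he hg
    obtain ⟨x, hx, rfl⟩ := he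
    obtain ⟨y, hy, rfl⟩ := hg
    have hxy : x ≠ y := fun h => hne (by rw [h])
    rcases Sym2.mem_iff.mp hve with rfl | rfl
    · rcases Sym2.mem_iff.mp hvg with h | h
      · exact hxy h
      · exact hpq (by rw [← mem_level.mp hx, h, (hf y hy).2])
    · rcases Sym2.mem_iff.mp hvg with h | h
      · exact hpq (by rw [← mem_level.mp hy, ← h, (hf x hx).2])
      · exact hxy (hinj hx hy h)
  · rw [Finset.card_image_of_injOn, card_level]
    intro x hx y hy hxy
    rw [Sym2.eq_iff] at hxy
    rcases hxy with ⟨h1, _⟩ | ⟨h1, h2⟩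
    · exact h1
    · exfalso
      exact hpq (by rw [← mem_level.mp hx, h1, (hf y hy).2])
  · have hsub : (Finset.univ.filter fun v : V n =>
        (wt v = p ∨ wt v = q) ∧ ∀ e ∈ (level n p).image (fun x => s(x, f x)), v ∉ e)
        ⊆ level n q \ (level n p).image f := by
      intro v hv
      simp only [Finset.mem_filter, Finset.mem_univ, true_and] at hv
      obtain ⟨hw, hunc⟩ := hv
      have hvnp : wt v ≠ p := by
        intro hvp
        exact hunc s(v, f v) (Finset.mem_image_of_mem _ (mem_level.mpr hvp))
          (Sym2.mem_mk_left v (f v))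
      have hwq : wt v = q := by tauto
      rw [Finset.mem_sdiff, mem_level]
      refine ⟨hwq, ?_⟩
      intro hvf
      simp only [Finset.mem_image] at hvf
      obtain ⟨x, hx, rfl⟩ := hvf
      exact hunc s(x, f x) (Finset.mem_image_of_mem _ hx) (Sym2.mem_mk_right x (f x))
    refine le_trans (Finset.card_le_card hsub) ?_
    rw [Finset.card_sdiff_of_subset]
    · rw [card_level, Finset.card_image_of_injOn (by exact_mod_cast hinj), card_level]
    · intro y hy
      simp only [Finset.mem_image] at hy
      obtain ⟨x, hx, rfl⟩ := hy
      exact mem_level.mpr (hf x hx).2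

lemma blockMatch (k : ℕ) :
    ∃ E : Finset (Sym2 (V n)),
      (↑E : Set (Sym2 (V n))) ⊆ (hypercube n).edgeSet ∧
      (∀ e ∈ E, ∀ v ∈ e, wt v = k ∨ wt v = k + 1) ∧
      (∀ e ∈ E, ∀ g ∈ E, e ≠ g → ∀ v, v ∈ e → v ∉ g) ∧
      E.card ≤ min (n.choose k) (n.choose (k + 1)) ∧
      (Finset.univ.filter fun v : V n => (wt v = k ∨ wt v = k + 1) ∧ ∀ e ∈ E, v ∉ e).card
        ≤ (n.choose k + n.choose (k + 1)) - 2 * min (n.choose k) (n.choose (k + 1)) := by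
  classical
  by_cases hkn : k < n
  · rcases le_total (n.choose k) (n.choose (k + 1)) with hle | hle
    · obtain ⟨f, hinj, hf⟩ := exists_inj_up hkn hle
      obtain ⟨E, h1, h2, h3, h4, h5⟩ := blockOfInj (show k ≠ k + 1 by omega) f hinj hf
      refine ⟨E, h1, h2, h3, by omega, ?_⟩
      refine le_trans h5 ?_
      omega
    · obtain ⟨g, hinj, hg⟩ := exists_inj_down hkn hle
      obtain ⟨E, h1, h2, h3, h4, h5⟩ := blockOfInj (show k + 1 ≠ k by omega) g hinj hg
      refine ⟨E, h1, fun e he v hv => (h2 e he v hv).symm, h3, by omega, ?_⟩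
      have : (Finset.univ.filter fun v : V n =>
            (wt v = k ∨ wt v = k + 1) ∧ ∀ e ∈ E, v ∉ e)
          = (Finset.univ.filter fun v : V n =>
            (wt v = k + 1 ∨ wt v = k) ∧ ∀ e ∈ E, v ∉ e) := by
        apply Finset.filter_congr; intro v _; rw [or_comm]
      rw [this]
      refine le_trans h5 ?_
      omega
  · refine ⟨∅, by simp, by simp, by simp, by simp, ?_⟩
    have hch : n.choose (k + 1) = 0 := Nat.choose_eq_zero_of_lt (by omega)
    have hsub : (Finset.univ.filter fun v : V n =>
        (wt v = k ∨ wt v = k + 1) ∧ ∀ e ∈ (∅ : Finset (Sym2 (V n))), v ∉ e)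
        ⊆ level n k ∪ level n (k + 1) := by
      intro v hv
      simp only [Finset.mem_filter, Finset.mem_univ, true_and] at hv
      rcases hv.1 with h | h
      · exact Finset.mem_union_left _ (mem_level.mpr h)
      · exact Finset.mem_union_right _ (mem_level.mpr h)
    refine le_trans (Finset.card_le_card hsub) (le_trans (Finset.card_union_le _ _) ?_)
    rw [card_level, card_level]
    omega
/-- grouping sums in blocks of three -/
lemma group3 (f : ℕ → ℕ) (T : ℕ) :
    ∑ j ∈ Finset.range T, (f (3 * j) + f (3 * j + 1) + f (3 * j + 2))
      = ∑ k ∈ Finset.range (3 * T), f k := by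
  induction T with
  | zero => simp
  | succ T ih =>
    rw [Finset.sum_range_succ, ih, show 3 * (T + 1) = 3 * T + 1 + 1 + 1 by ring,
      Finset.sum_range_succ, Finset.sum_range_succ, Finset.sum_range_succ]
    omega

lemma sum_choose_all {K : ℕ} (hK : n + 1 ≤ K) :
    ∑ k ∈ Finset.range K, n.choose k = 2 ^ n := by
  rw [← Finset.sum_range_add_sum_Ico _ hK, Nat.sum_range_choose]
  have h0 : ∑ k ∈ Finset.Ico (n + 1) K, n.choose k = 0 := by
    apply Finset.sum_eq_zero
    intro k hk
    exact Nat.choose_eq_zero_of_lt (Finset.mem_Ico.mp hk).1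
  omega

lemma choose_mono_up {k : ℕ} (hk : k < n / 2) : n.choose k ≤ n.choose (k + 1) := by
  have h1 := Nat.choose_succ_right_eq n k
  have h2 : k + 1 ≤ n - k := by omega
  have h3 : n.choose k * (k + 1) ≤ n.choose k * (n - k) := Nat.mul_le_mul_left _ h2
  rw [← h1] at h3
  exact Nat.le_of_mul_le_mul_right h3 (Nat.succ_pos k)

lemma choose_mono_down {k : ℕ} (hk : n / 2 ≤ k) : n.choose (k + 1) ≤ n.choose k := by
  by_cases hkn : k < n
  · have h1 := Nat.choose_succ_right_eq n k
    have h2 : n - k ≤ k + 1 := by omega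
    have h3 : n.choose k * (n - k) ≤ n.choose k * (k + 1) := Nat.mul_le_mul_left _ h2
    rw [← h1] at h3
    exact Nat.le_of_mul_le_mul_right h3 (Nat.succ_pos k)
  · rw [Nat.choose_eq_zero_of_lt (by omega)]
    exact Nat.zero_le _

lemma choose_anti_from {k : ℕ} (hk : n / 2 ≤ k) : n.choose k ≤ n.choose (n / 2) := by
  induction k with
  | zero => exact Nat.choose_le_middle 0 n
  | succ k ih =>
    by_cases h : n / 2 ≤ k
    · exact le_trans (choose_mono_down h) (ih h)
    · have : n / 2 = k + 1 := by omega
      rw [this]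

lemma tele_up : ∀ K, K ≤ n / 2 →
    ∑ k ∈ Finset.range K, (n.choose (k + 1) - n.choose k) ≤ n.choose K := by
  intro K
  induction K with
  | zero => simp
  | succ K ih =>
    intro hK
    rw [Finset.sum_range_succ]
    have h1 := ih (by omega)
    have h2 := choose_mono_up (n := n) (k := K) (by omega)
    omega

lemma tele_down : ∀ K, n / 2 ≤ K →
    ∑ k ∈ Finset.Ico (n / 2) K, (n.choose k - n.choose (k + 1)) + n.choose K
      ≤ n.choose (n / 2) := by
  intro K
  induction K with
  | zero =>
    intro hK
    simp [show n / 2 = 0 by omega]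
  | succ K ih =>
    intro hK
    by_cases h : n / 2 ≤ K
    · rw [Finset.sum_Ico_succ_top h]
      have h1 := ih h
      have h3 := choose_mono_down (n := n) h
      omega
    · have : n / 2 = K + 1 := by omega
      simp [this]

lemma sum_dif {K : ℕ} (hK : n / 2 ≤ K) :
    ∑ k ∈ Finset.range K,
      ((n.choose k - n.choose (k + 1)) + (n.choose (k + 1) - n.choose k))
      ≤ 2 * n.choose (n / 2) := by
  rw [← Finset.sum_range_add_sum_Ico _ hK]
  have e1 : ∑ k ∈ Finset.range (n / 2),
      ((n.choose k - n.choose (k + 1)) + (n.choose (k + 1) - n.choose k))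
      = ∑ k ∈ Finset.range (n / 2), (n.choose (k + 1) - n.choose k) := by
    apply Finset.sum_congr rfl
    intro k hk
    have := choose_mono_up (n := n) (k := k) (Finset.mem_range.mp hk)
    omega
  have e2 : ∑ k ∈ Finset.Ico (n / 2) K,
      ((n.choose k - n.choose (k + 1)) + (n.choose (k + 1) - n.choose k))
      = ∑ k ∈ Finset.Ico (n / 2) K, (n.choose k - n.choose (k + 1)) := by
    apply Finset.sum_congr rfl
    intro k hk
    have := choose_mono_down (n := n) (k := k) (Finset.mem_Ico.mp hk).1
    omega
  rw [e1, e2]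
  have h1 := tele_up (n := n) (n / 2) le_rfl
  have h2 := tele_down (n := n) K hK
  omega

lemma exists_maximal_ext {W : Type*} [Fintype W] (G : SimpleGraph W) (M : Set (Sym2 W))
    (hM : IsMatching G M) : ∃ M', IsMaximalMatching G M' ∧ M ⊆ M' := by
  classical
  set S : Set (Set (Sym2 W)) := {N | IsMatching G N ∧ M ⊆ N} with hS
  have hSfin : S.Finite := by
    apply Set.Finite.subset (Set.Finite.finite_subsets (Set.toFinite G.edgeSet))
    intro N hN
    exact hN.1.1
  obtain ⟨M', hM'S, hmax⟩ := Set.Finite.exists_maximalFor Set.ncard S hSfin ⟨M, hM, subset_rfl⟩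
  refine ⟨M', ⟨hM'S.1, ?_⟩, hM'S.2⟩
  intro N hN hsub
  have hNS : N ∈ S := ⟨hN, le_trans hM'S.2 hsub⟩
  have hle : M'.ncard ≤ N.ncard := Set.ncard_le_ncard hsub (Set.toFinite N)
  have := hmax hNS hle
  exact (Set.eq_of_subset_of_ncard_le hsub this (Set.toFinite N)).symm

lemma main (n : ℕ) :
    ∃ M : Set (Sym2 (Fin n → Bool)), IsMaximalMatching (hypercube n) M ∧
      (M.ncard : ℝ) ≤ (2 : ℝ) ^ n / 3 + 6 * (n.choose (n / 2) : ℝ) := by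
  classical
  set T := n / 3 + 1 with hT
  obtain ⟨E, hE⟩ := Classical.axiomOfChoice (fun k : ℕ => blockMatch (n := n) k)
  have hE1 : ∀ k, (↑(E k) : Set (Sym2 (V n))) ⊆ (hypercube n).edgeSet := fun k => (hE k).1
  have hE2 : ∀ k, ∀ e ∈ E k, ∀ v ∈ e, wt v = k ∨ wt v = k + 1 := fun k => (hE k).2.1
  have hE3 : ∀ k, ∀ e ∈ E k, ∀ g ∈ E k, e ≠ g → ∀ v, v ∈ e → v ∉ g := fun k => (hE k).2.2.1
  have hE4 : ∀ k, (E k).card ≤ min (n.choose k) (n.choose (k + 1)) := fun k => (hE k).2.2.2.1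
  have hE5 : ∀ k, (Finset.univ.filter fun v : V n =>
      (wt v = k ∨ wt v = k + 1) ∧ ∀ e ∈ E k, v ∉ e).card
      ≤ (n.choose k + n.choose (k + 1)) - 2 * min (n.choose k) (n.choose (k + 1)) :=
    fun k => (hE k).2.2.2.2
  set M0 : Finset (Sym2 (V n)) := (Finset.range T).biUnion (fun j => E (3 * j)) with hM0
  have hM0match : IsMatching (hypercube n) ↑M0 := by
    constructor
    · intro e he
      rw [Finset.mem_coe, hM0, Finset.mem_biUnion] at he
      obtain ⟨j, _, he⟩ := he
      exact hE1 (3 * j) he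
    · intro e he g hg hne v hve hvg
      rw [Finset.mem_coe, hM0, Finset.mem_biUnion] at he hg
      obtain ⟨j, _, he⟩ := he
      obtain ⟨j', _, hg⟩ := hg
      by_cases hjj : j = j'
      · subst hjj
        exact hE3 (3 * j) e he g hg hne v hve hvg
      · have w1 := hE2 (3 * j) e he v hve
        have w2 := hE2 (3 * j') g hg v hvg
        omega
  obtain ⟨M, hMmax, hM0M⟩ := exists_maximal_ext _ _ hM0match
  refine ⟨M, hMmax, ?_⟩
  set Bad := Finset.univ.filter (fun v : V n => wt v % 3 ≠ 2 ∧ ∀ e ∈ M0, v ∉ e) with hBad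
  -- each extension edge contains a bad vertex
  have key : ∀ e ∈ M \ ↑M0, ∃ v, v ∈ e ∧ wt v % 3 ≠ 2 ∧ ∀ g ∈ M0, v ∉ g := by
    intro e he
    obtain ⟨heM, heM0⟩ := he
    have heE : e ∈ (hypercube n).edgeSet := hMmax.1.1 heM
    have hunc : ∀ v ∈ e, ∀ g ∈ M0, v ∉ g := by
      intro v hv g hg
      have hgM : (g : Sym2 (V n)) ∈ M := hM0M hg
      have hneg : e ≠ g := fun h => heM0 (h ▸ hg)
      exact hMmax.1.2 e heM g hgM hneg v hv
    induction e with
    | h x y =>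
      have hadj : (hypercube n).Adj x y := heE
      have hwt := adj_wt hadj
      by_cases hx2 : wt x % 3 = 2
      · refine ⟨y, Sym2.mem_mk_right x y, by omega, hunc y (Sym2.mem_mk_right x y)⟩
      · exact ⟨x, Sym2.mem_mk_left x y, hx2, hunc x (Sym2.mem_mk_left x y)⟩
  have hdiffle : (M \ ↑M0).ncard ≤ Bad.card := by
    rw [← Set.ncard_coe_finset Bad]
    set F : Sym2 (V n) → V n := fun e =>
      if h : ∃ v, v ∈ e ∧ wt v % 3 ≠ 2 ∧ ∀ g ∈ M0, v ∉ g then h.choose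
      else (fun _ => false) with hF
    apply Set.ncard_le_ncard_of_injOn F
    · intro e he
      have hk := key e he
      have hspec := hk.choose_spec
      rw [hF]
      simp only [dif_pos hk]
      rw [hBad, Finset.coe_filter]
      exact ⟨Finset.mem_univ _, hspec.2.1, hspec.2.2⟩
    · intro e he e' he' hFe
      by_contra hne
      have hk := key e he
      have hk' := key e' he'
      have h1 : F e ∈ e := by rw [hF]; simp only [dif_pos hk]; exact hk.choose_spec.1
      have h2 : F e' ∈ e' := by rw [hF]; simp only [dif_pos hk']; exact hk'.choose_spec.1
      rw [hFe] at h1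
      exact hMmax.1.2 e' he'.1 e he.1 (Ne.symm hne) (F e') h2 h1
  have hsplit : M.ncard = (↑M0 : Set (Sym2 (V n))).ncard + (M \ ↑M0).ncard := by
    have := Set.ncard_diff_add_ncard_of_subset hM0M (Set.toFinite M)
    omega
  have hM0le : M0.card ≤ ∑ j ∈ Finset.range T, min (n.choose (3 * j)) (n.choose (3 * j + 1)) :=
    le_trans (Finset.card_biUnion_le) (Finset.sum_le_sum fun j _ => hE4 (3 * j))
  have hBadle : Bad.card ≤ ∑ j ∈ Finset.range T,
      ((n.choose (3 * j) + n.choose (3 * j + 1))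
        - 2 * min (n.choose (3 * j)) (n.choose (3 * j + 1))) := by
    have hsub : Bad ⊆ (Finset.range T).biUnion (fun j =>
        Finset.univ.filter fun v : V n =>
          (wt v = 3 * j ∨ wt v = 3 * j + 1) ∧ ∀ e ∈ E (3 * j), v ∉ e) := by
      intro v hv
      rw [hBad, Finset.mem_filter] at hv
      obtain ⟨-, hv2, hv3⟩ := hv
      have hwle := wt_le v
      rw [Finset.mem_biUnion]
      refine ⟨wt v / 3, Finset.mem_range.mpr (by omega), ?_⟩
      rw [Finset.mem_filter]
      refine ⟨Finset.mem_univ _, by omega, ?_⟩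
      intro e heE
      exact hv3 e (Finset.mem_biUnion.mpr ⟨wt v / 3, Finset.mem_range.mpr (by omega), heE⟩)
    exact le_trans (Finset.card_le_card hsub)
      (le_trans (Finset.card_biUnion_le) (Finset.sum_le_sum fun j _ => hE5 (3 * j)))
  -- arithmetic
  have h3T : n + 1 ≤ 3 * T := by omega
  have hm3T : n / 2 ≤ 3 * T := by omega
  have hgroup := group3 (fun k => n.choose k) T
  have hsum2 := sum_choose_all (n := n) h3T
  have hdifbound := sum_dif (n := n) hm3T
  have hsubsum1 : ∑ j ∈ Finset.range T,
      ((n.choose (3 * j + 1) - n.choose (3 * j + 2))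
        + (n.choose (3 * j + 2) - n.choose (3 * j + 1))) ≤ 2 * n.choose (n / 2) := by
    refine le_trans (le_trans (Finset.sum_le_sum (fun j _ => ?_))
      (le_of_eq (group3 (fun k => (n.choose k - n.choose (k + 1))
        + (n.choose (k + 1) - n.choose k)) T))) hdifbound
    have e1 : 3 * j + 1 + 1 = 3 * j + 2 := by omega
    have e2 : 3 * j + 2 + 1 = 3 * j + 3 := by omega
    have e3 : 3 * j + 0 + 1 = 3 * j + 1 := by omega
    simp only [e1, e2, e3]
    omega
  have hsubsum0 : ∑ j ∈ Finset.range T,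
      ((n.choose (3 * j) - n.choose (3 * j + 1))
        + (n.choose (3 * j + 1) - n.choose (3 * j))) ≤ 2 * n.choose (n / 2) := by
    refine le_trans (le_trans (Finset.sum_le_sum (fun j _ => ?_))
      (le_of_eq (group3 (fun k => (n.choose k - n.choose (k + 1))
        + (n.choose (k + 1) - n.choose k)) T))) hdifbound
    have e1 : 3 * j + 1 + 1 = 3 * j + 2 := by omega
    have e2 : 3 * j + 2 + 1 = 3 * j + 3 := by omega
    have e3 : 3 * j + 0 + 1 = 3 * j + 1 := by omega
    simp only [e1, e2, e3]
    omega
  have hminsum : 3 * ∑ j ∈ Finset.range T, min (n.choose (3 * j)) (n.choose (3 * j + 1))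
      ≤ 2 ^ n + 2 * n.choose (n / 2) := by
    have step : ∀ j ∈ Finset.range T,
        3 * min (n.choose (3 * j)) (n.choose (3 * j + 1))
        ≤ (n.choose (3 * j) + n.choose (3 * j + 1) + n.choose (3 * j + 2))
          + ((n.choose (3 * j + 1) - n.choose (3 * j + 2))
            + (n.choose (3 * j + 2) - n.choose (3 * j + 1))) := by
      intro j _
      omega
    calc 3 * ∑ j ∈ Finset.range T, min (n.choose (3 * j)) (n.choose (3 * j + 1))
        = ∑ j ∈ Finset.range T, 3 * min (n.choose (3 * j)) (n.choose (3 * j + 1)) := by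
          rw [Finset.mul_sum]
      _ ≤ ∑ j ∈ Finset.range T,
          ((n.choose (3 * j) + n.choose (3 * j + 1) + n.choose (3 * j + 2))
          + ((n.choose (3 * j + 1) - n.choose (3 * j + 2))
            + (n.choose (3 * j + 2) - n.choose (3 * j + 1)))) := Finset.sum_le_sum step
      _ = ∑ j ∈ Finset.range T,
          (n.choose (3 * j) + n.choose (3 * j + 1) + n.choose (3 * j + 2))
          + ∑ j ∈ Finset.range T,
          ((n.choose (3 * j + 1) - n.choose (3 * j + 2))
            + (n.choose (3 * j + 2) - n.choose (3 * j + 1))) := Finset.sum_add_distrib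
      _ ≤ 2 ^ n + 2 * n.choose (n / 2) := by
          rw [hgroup, hsum2]
          exact Nat.add_le_add_left hsubsum1 _
  have hdsum : ∑ j ∈ Finset.range T,
      ((n.choose (3 * j) + n.choose (3 * j + 1))
        - 2 * min (n.choose (3 * j)) (n.choose (3 * j + 1))) ≤ 2 * n.choose (n / 2) := by
    refine le_trans (le_trans (Finset.sum_le_sum (fun j _ => ?_)) le_rfl) hsubsum0
    omega
  have hfinal : 3 * M.ncard ≤ 2 ^ n + 8 * n.choose (n / 2) := by
    have h1 : (↑M0 : Set (Sym2 (V n))).ncard = M0.card := Set.ncard_coe_finset M0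
    omega
  have hcast : (3 : ℝ) * (M.ncard : ℝ) ≤ (2 : ℝ) ^ n + 8 * (n.choose (n / 2) : ℝ) := by
    exact_mod_cast hfinal
  have hCnn : (0 : ℝ) ≤ (n.choose (n / 2) : ℝ) := Nat.cast_nonneg _
  linarith
end HQaux

/-- `Q_n` admits a maximal matching of cardinality at most
`2^n/3 + 6·C(n, ⌊n/2⌋)`. -/
theorem stmt10 (n : ℕ) :
    ∃ M : Set (Sym2 (Fin n → Bool)), IsMaximalMatching (hypercube n) M ∧
      (M.ncard : ℝ) ≤ (2 : ℝ) ^ n / 3 + 6 * (n.choose (n / 2) : ℝ) :=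
  HQaux.main n
end
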